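/- arXiv:2103.04378 — 7 statements merged into one kernel-verified Lean document; each statement's English description precedes it below -/
import Mathlib

section
/- Let K = ℚ(q, s₁, …, s_N) and Λ^{B_N} = K[[y₁, …, y_N]] where y_i represents x_{i+1}/x_i for 1 ≤ i ≤ N−1 and y_N represents 1/x_N. Then there exists a unique formal power series f ∈ Λ^{B_N} whose constant term equals 1 and which satisfies the eigenvalue equation D^{B_N Toda}(x|s|q) f = Σ_{i=1}^N (s_i + s_i^{−1}) f. -/
open scoped BigOperators

noncomputable section

attribute [local instance] Classical.propDecidable

namespace QToda

/-- The base field `ℚ(q, s₁, …, s_N)`: the fraction field of the polynomial ring in `N + 1`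
variables over `ℚ`, where variable `0` is `q` and variable `i` is `sᵢ` for `1 ≤ i ≤ N`. -/
abbrev K (N : ℕ) : Type := FractionRing (MvPolynomial (Fin (N + 1)) ℚ)

/-- The indeterminate `q` of `ℚ(q, s₁, …, s_N)`. -/
def qP (N : ℕ) : K N :=
  algebraMap (MvPolynomial (Fin (N + 1)) ℚ) (K N) (MvPolynomial.X ⟨0, Nat.succ_pos N⟩)

/-- The indeterminate `sᵢ` of `ℚ(q, s₁, …, s_N)` (1-based; meaningful for `1 ≤ i ≤ N`). -/
def sP (N : ℕ) (i : ℕ) : K N :=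
  if h : i ≤ N then
    algebraMap (MvPolynomial (Fin (N + 1)) ℚ) (K N) (MvPolynomial.X ⟨i, Nat.lt_succ_of_le h⟩)
  else 1

variable {F : Type*} [Field F]

/-- The q-Pochhammer symbol `(a;q)_n = ∏_{k=1}^n (1 - q^(k-1) a)`. -/
def qPoch (q a : F) (n : ℕ) : F := ∏ k ∈ Finset.range n, (1 - q ^ k * a)

/-- The pairs `(i, j)` with `a ≤ i < j ≤ b`. -/
def pairsLT (a b : ℕ) : Finset (ℕ × ℕ) :=
  (Finset.Icc a b ×ˢ Finset.Icc a b).filter fun p => p.1 < p.2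

/-- `θ` is (the extension by zero of) a strictly upper triangular `N × N` matrix of
nonnegative integers, 1-based indexing. -/
def UT (N : ℕ) (θ : ℕ → ℕ → ℕ) : Prop :=
  ∀ i j, ¬(1 ≤ i ∧ i < j ∧ j ≤ N) → θ i j = 0

/-- `θ` is (the extension by zero of) a vector `(θ₁, …, θ_N) ∈ ℤ_{≥0}^N`, 1-based indexing. -/
def Vec (N : ℕ) (θ : ℕ → ℕ) : Prop := ∀ i, ¬(1 ≤ i ∧ i ≤ N) → θ i = 0

/-- The coefficients `c^{Toda}_N(θ; s; q)` of the `A_{N-1}` q-Toda function. -/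
def cToda (q : F) (s : ℕ → F) (N : ℕ) (θ : ℕ → ℕ → ℕ) : F :=
  ∏ k ∈ Finset.Icc 2 N,
    ∏ p ∈ (Finset.Icc 1 (k - 1) ×ˢ Finset.Icc 1 (k - 1)).filter (fun p => p.1 ≤ p.2),
      (1 / qPoch q
          (q ^ (∑ a ∈ Finset.Icc (k + 1) N, ((θ p.1 a : ℤ) - (θ (p.2 + 1) a : ℤ)))
            * q * s (p.2 + 1) / s p.1) (θ p.1 k))
      * (q ^ (θ p.1 k)
          / qPoch q
            (q ^ ((θ p.2 k : ℤ) - (θ p.1 k : ℤ)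
                - ∑ a ∈ Finset.Icc (k + 1) N, ((θ p.1 a : ℤ) - (θ p.2 a : ℤ)))
              * q * s p.1 / s p.2) (θ p.1 k))

/-- The asymptotically free `A_{N-1}` q-Toda function
`f^{A_{N-1} Toda}(x|s|q) = Σ_θ c^{Toda}_N(θ;s;q) ∏_{i<j} (x_j/x_i)^{θ_{i,j}}`,
regarded as a formal power series in the `M` variables `y₁, …, y_M` (where `y_m = x_{m+1}/x_m`,
so that `x_j/x_i = y_i ⋯ y_{j-1}`); here `M = N - 1`, or `M = N` for the natural embedding
`K[[y₁,…,y_{N-1}]] ⊆ K[[y₁,…,y_N]]`.  The coefficient of `y^d` is the (finite) sum of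
`c^{Toda}_N(θ;s;q)` over the strictly upper triangular `θ` with
`Σ_{i ≤ m < j} θ_{i,j} = d_m` for all `m`. -/
def fA (q : F) (s : ℕ → F) (N M : ℕ) : MvPowerSeries (Fin M) F :=
  fun d => ∑ᶠ θ : ℕ → ℕ → ℕ,
    if UT N θ ∧ ∀ m : Fin M,
        d m = ∑ p ∈ pairsLT 1 N,
          (if p.1 ≤ (m : ℕ) + 1 ∧ (m : ℕ) + 1 < p.2 then θ p.1 p.2 else 0)
    then cToda q s N θ else 0

/-- The monomial `∏ y_m ^ e(m)` (with coefficient 1). -/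
def mono {M : ℕ} (e : Fin M → ℕ) : MvPowerSeries (Fin M) F :=
  MvPowerSeries.monomial (Finsupp.equivFunOnFinite.symm e) 1

/-- The generator `y_ℓ` (1-based label `ℓ`, i.e. the variable of index `ℓ - 1`). -/
def Y {M : ℕ} (ℓ : ℕ) : MvPowerSeries (Fin M) F :=
  mono fun m => if (m : ℕ) + 1 = ℓ then 1 else 0

/-- The `ε`-th power of the shift operator `T_{q,x_i}`, i.e. the continuous algebra
automorphism determined by `y_{i-1} ↦ q^ε y_{i-1}` (when `i ≥ 2`) and `y_i ↦ q^{-ε} y_i`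
(when `y_i` is among the variables), fixing all other generators.  On the coefficient at a
monomial `y^d`, it multiplies by `q^{ε (d_{i-1} - d_i)}`. -/
def Tq (q : F) {M : ℕ} (i : ℕ) (ε : ℤ) (f : MvPowerSeries (Fin M) F) :
    MvPowerSeries (Fin M) F :=
  fun d => q ^ (ε * ∑ j : Fin M,
      (((if (j : ℕ) + 2 = i then 1 else 0) - (if (j : ℕ) + 1 = i then 1 else 0)) * (d j : ℤ)))
    * f d

/-- The `B_N` q-Toda operator
`D^{B_N} = Σ_{i=1}^{N-1} s_i (1 - x_{i+1}/x_i) T_{q,x_i} + s_N (1 - 1/x_N) T_{q,x_N}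
 + s₁⁻¹ T_{q,x₁}⁻¹ + Σ_{i=2}^N s_i⁻¹ (1 - x_i/x_{i-1}) T_{q,x_i}⁻¹`,
acting on `K[[y₁, …, y_N]]` with `y_i = x_{i+1}/x_i` (`i ≤ N-1`), `y_N = 1/x_N`. -/
def DB (q : F) (s : ℕ → F) (N : ℕ) (f : MvPowerSeries (Fin N) F) : MvPowerSeries (Fin N) F :=
  (∑ i ∈ Finset.Icc 1 (N - 1), s i • ((1 - Y i) * Tq q i 1 f))
    + s N • ((1 - Y N) * Tq q N 1 f)
    + (s 1)⁻¹ • Tq q 1 (-1) f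
    + ∑ i ∈ Finset.Icc 2 N, (s i)⁻¹ • ((1 - Y (i - 1)) * Tq q i (-1) f)

/-- The `A_{N-1}` q-Toda operator
`D^{A_{N-1}} = Σ_{i=1}^{N-1} s_i (1 - x_{i+1}/x_i) T_{q,x_i} + s_N T_{q,x_N}`,
acting on `K[[y₁, …, y_{N-1}]]`. -/
def DA (q : F) (s : ℕ → F) (N : ℕ) (f : MvPowerSeries (Fin (N - 1)) F) :
    MvPowerSeries (Fin (N - 1)) F :=
  (∑ i ∈ Finset.Icc 1 (N - 1), s i • ((1 - Y i) * Tq q i 1 f)) + s N • Tq q N 1 f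

/-- The branching coefficients `e^{B_N/A_{N-1}}_θ(s|q)`. -/
def eBA (q : F) (s : ℕ → F) (N : ℕ) (θ : ℕ → ℕ) : F :=
  (∏ k ∈ Finset.Icc 1 N,
      q ^ ((N - k + 1) * θ k) / (qPoch q q (θ k) * qPoch q (q / s k ^ 2) (θ k)))
  * ∏ p ∈ pairsLT 1 N,
      (1 / (qPoch q (q * s p.2 / s p.1) (θ p.1)
          * qPoch q (q ^ ((θ p.2 : ℤ) - (θ p.1 : ℤ)) * q * s p.1 / s p.2) (θ p.1)))
      * (qPoch q (q / (s p.1 * s p.2)) (θ p.1 + θ p.2)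
          / (qPoch q (q / (s p.1 * s p.2)) (θ p.1)
            * qPoch q (q / (s p.1 * s p.2)) (θ p.2)))

/-- The coefficients `d^{Toda}_N(θ; s; q)`. -/
def dToda (q : F) (s : ℕ → F) (N : ℕ) (θ : ℕ → ℕ) : F :=
  (∏ i ∈ Finset.Icc 1 (N - 1),
      (1 / qPoch q q (θ i)) * (q ^ θ i / qPoch q (q * s N / s i) (θ i)))
  * ∏ p ∈ pairsLT 1 (N - 1),
      (1 / qPoch q (q * s p.2 / s p.1) (θ p.1))
      * (q ^ θ p.1
          / qPoch q (q ^ ((θ p.2 : ℤ) - (θ p.1 : ℤ) + 1) * s p.1 / s p.2) (θ p.1))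

/-- The shifted parameters `(q^{-θ₁} s₁, …, q^{-θ_N} s_N)`. -/
def shiftAll (q : F) (s : ℕ → F) (θ : ℕ → ℕ) : ℕ → F := fun i => q ^ (-(θ i : ℤ)) * s i

/-- The shifted parameters `q^{-ε_k}·s = (s₁, …, q⁻¹ s_k, …, s_N)`. -/
def shiftOne (q : F) (s : ℕ → F) (k : ℕ) : ℕ → F := fun i => if i = k then q⁻¹ * s i else s i

/-- The right-hand side of the branching formula:
`Σ_{θ ∈ ℤ_{≥0}^N} e^{B_N/A_{N-1}}_θ(s|q) ∏_i x_i^{-θ_i}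
 · f^{A_{N-1} Toda}(x | q^{-θ₁}s₁, …, q^{-θ_N}s_N | q)`,
where `x_i⁻¹ = y_i y_{i+1} ⋯ y_N`, so that `∏_i x_i^{-θ_i}` is the monomial whose exponent at
`y_ℓ` is `θ₁ + ⋯ + θ_ℓ`. -/
def branchRHS (q : F) (s : ℕ → F) (N : ℕ) : MvPowerSeries (Fin N) F :=
  fun d => ∑ᶠ θ : ℕ → ℕ,
    if Vec N θ then
      eBA q s N θ * MvPowerSeries.coeff d
        (mono (fun m => ∑ i ∈ Finset.Icc 1 ((m : ℕ) + 1), θ i)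
          * fA q (shiftAll q s θ) N N)
    else 0

end QToda

namespace QToda

variable {F : Type*} [Field F]

/-- The exponent weight `d_{i-1} - d_i` appearing in `Tq`. -/
def wgt (N : ℕ) (i : ℕ) (d : Fin N →₀ ℕ) : ℤ :=
  ∑ j : Fin N,
    (((if (j : ℕ) + 2 = i then 1 else 0) - (if (j : ℕ) + 1 = i then 1 else 0)) * (d j : ℤ))

lemma Tq_coeff (q : F) {N : ℕ} (i : ℕ) (ε : ℤ) (f : MvPowerSeries (Fin N) F)
    (d : Fin N →₀ ℕ) :
    MvPowerSeries.coeff d (Tq q i ε f) = q ^ (ε * wgt N i d) * MvPowerSeries.coeff d f := rfl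

/-- The exponent finsupp of `Y ℓ`. -/
def eV (N : ℕ) (ℓ : ℕ) : Fin N →₀ ℕ :=
  Finsupp.equivFunOnFinite.symm fun m => if (m : ℕ) + 1 = ℓ then 1 else 0

lemma eV_apply (N ℓ : ℕ) (j : Fin N) : eV N ℓ j = if (j : ℕ) + 1 = ℓ then 1 else 0 := rfl

lemma Y_eq {N : ℕ} (ℓ : ℕ) :
    (Y ℓ : MvPowerSeries (Fin N) F) = MvPowerSeries.monomial (eV N ℓ) 1 := rfl

lemma one_sub_Y_mul_coeff {N : ℕ} (ℓ : ℕ) (g : MvPowerSeries (Fin N) F) (d : Fin N →₀ ℕ) :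
    MvPowerSeries.coeff d ((1 - Y ℓ) * g)
      = MvPowerSeries.coeff d g
        - (if eV N ℓ ≤ d then MvPowerSeries.coeff (d - eV N ℓ) g else 0) := by
  have h1 : ((1 - Y ℓ) * g) = g - (Y ℓ : MvPowerSeries (Fin N) F) * g := by ring
  rw [h1, map_sub]
  congr 1
  rw [Y_eq, MvPowerSeries.coeff_monomial_mul]
  simp only [one_mul]

/-- The eigen-coefficient. -/
def Ad (q : F) (s : ℕ → F) (N : ℕ) (d : Fin N →₀ ℕ) : F :=
  (∑ i ∈ Finset.Icc 1 (N - 1), s i * q ^ (1 * wgt N i d))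
    + s N * q ^ (1 * wgt N N d)
    + (s 1)⁻¹ * q ^ ((-1) * wgt N 1 d)
    + ∑ i ∈ Finset.Icc 2 N, (s i)⁻¹ * q ^ ((-1) * wgt N i d)

def Ev (s : ℕ → F) (N : ℕ) : F := ∑ i ∈ Finset.Icc 1 N, (s i + (s i)⁻¹)

def yt (q : F) {N : ℕ} (f : MvPowerSeries (Fin N) F) (d : Fin N →₀ ℕ) (ℓ i : ℕ) (ε : ℤ) : F :=
  if eV N ℓ ≤ d then q ^ (ε * wgt N i (d - eV N ℓ)) * MvPowerSeries.coeff (d - eV N ℓ) f else 0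

def Rd (q : F) (s : ℕ → F) (N : ℕ) (f : MvPowerSeries (Fin N) F) (d : Fin N →₀ ℕ) : F :=
  (∑ i ∈ Finset.Icc 1 (N - 1), s i * yt q f d i i 1) + s N * yt q f d N N 1
    + ∑ i ∈ Finset.Icc 2 N, (s i)⁻¹ * yt q f d (i - 1) i (-1)

lemma DB_coeff (q : F) (s : ℕ → F) (N : ℕ) (f : MvPowerSeries (Fin N) F) (d : Fin N →₀ ℕ) :
    MvPowerSeries.coeff d (DB q s N f)
      = Ad q s N d * MvPowerSeries.coeff d f - Rd q s N f d := by
  have hc : ∀ (ℓ i : ℕ) (ε : ℤ),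
      MvPowerSeries.coeff d ((1 - Y ℓ) * Tq q i ε f)
        = q ^ (ε * wgt N i d) * MvPowerSeries.coeff d f - yt q f d ℓ i ε := by
    intro ℓ i ε
    rw [one_sub_Y_mul_coeff, Tq_coeff, yt]
    rfl
  rw [DB, map_add, map_add, map_add, map_sum, map_sum]
  simp only [MvPowerSeries.coeff_smul, hc, Tq_coeff]
  simp only [Ad, Rd, mul_sub, Finset.sum_sub_distrib, add_mul, Finset.sum_mul, mul_assoc]
  ring

lemma wgt_zero (N i : ℕ) : wgt N i (0 : Fin N →₀ ℕ) = 0 := by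
  simp [wgt]

lemma Icc_one_eq_insert (N : ℕ) (hN : 1 ≤ N) :
    Finset.Icc 1 N = insert 1 (Finset.Icc 2 N) := by
  ext x; simp only [Finset.mem_Icc, Finset.mem_insert]; omega

lemma Icc_top_eq_insert (N : ℕ) (hN : 1 ≤ N) :
    Finset.Icc 1 N = insert N (Finset.Icc 1 (N - 1)) := by
  ext x; simp only [Finset.mem_Icc, Finset.mem_insert]; omega

lemma one_not_mem_Icc (N : ℕ) : (1 : ℕ) ∉ Finset.Icc 2 N := by simp

lemma top_not_mem_Icc (N : ℕ) : N ∉ Finset.Icc 1 (N - 1) := by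
  simp only [Finset.mem_Icc]; omega

lemma Ad_Icc (q : F) (s : ℕ → F) (N : ℕ) (hN : 1 ≤ N) (d : Fin N →₀ ℕ) :
    Ad q s N d = ∑ i ∈ Finset.Icc 1 N,
      (s i * q ^ (wgt N i d) + (s i)⁻¹ * q ^ (-wgt N i d)) := by
  have e1 : ∑ i ∈ Finset.Icc 1 N, s i * q ^ wgt N i d
      = s N * q ^ wgt N N d + ∑ i ∈ Finset.Icc 1 (N - 1), s i * q ^ wgt N i d := by
    rw [Icc_top_eq_insert N hN, Finset.sum_insert (top_not_mem_Icc N)]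
  have e2 : ∑ i ∈ Finset.Icc 1 N, (s i)⁻¹ * q ^ (-wgt N i d)
      = (s 1)⁻¹ * q ^ (-wgt N 1 d) + ∑ i ∈ Finset.Icc 2 N, (s i)⁻¹ * q ^ (-wgt N i d) := by
    rw [Icc_one_eq_insert N hN, Finset.sum_insert (one_not_mem_Icc N)]
  rw [Finset.sum_add_distrib, e1, e2]
  simp only [Ad, one_mul, neg_mul]
  ring

lemma Ad_zero (q : F) (s : ℕ → F) (N : ℕ) (hN : 1 ≤ N) :
    Ad q s N (0 : Fin N →₀ ℕ) = Ev s N := by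
  rw [Ad_Icc q s N hN, Ev]
  apply Finset.sum_congr rfl
  intro i _
  simp [wgt_zero]

/-- The closed formula for `wgt`. -/
lemma wgt_eq (N i : ℕ) (hi1 : 1 ≤ i) (hiN : i ≤ N) (d : Fin N →₀ ℕ) :
    wgt N i d = (if h : 2 ≤ i then (d ⟨i - 2, by omega⟩ : ℤ) else 0)
      - (d ⟨i - 1, by omega⟩ : ℤ) := by
  rw [wgt]
  have : ∀ j : Fin N, (((if (j : ℕ) + 2 = i then 1 else 0)
      - (if (j : ℕ) + 1 = i then 1 else 0)) * (d j : ℤ))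
      = (if (j : ℕ) + 2 = i then (d j : ℤ) else 0)
        - (if (j : ℕ) + 1 = i then (d j : ℤ) else 0) := by
    intro j; split <;> split <;> simp_all <;> omega
  rw [Finset.sum_congr rfl fun j _ => this j, Finset.sum_sub_distrib]
  congr 1
  · by_cases h : 2 ≤ i
    · rw [dif_pos h]
      rw [Finset.sum_eq_single (⟨i - 2, by omega⟩ : Fin N)]
      · rw [if_pos (by simp; omega)]
      · intro j _ hj
        rw [if_neg]
        intro hc
        exact hj (by apply Fin.ext; simp; omega)
      · simp
    · rw [dif_neg h]
      apply Finset.sum_eq_zero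
      intro j _
      rw [if_neg (by omega)]
  · rw [Finset.sum_eq_single (⟨i - 1, by omega⟩ : Fin N)]
    · rw [if_pos (by simp; omega)]
    · intro j _ hj
      rw [if_neg]
      intro hc
      exact hj (by apply Fin.ext; simp; omega)
    · simp

lemma exists_wgt_ne (N : ℕ) (hN : 1 ≤ N) (d : Fin N →₀ ℕ) (hd : d ≠ 0) :
    ∃ i ∈ Finset.Icc 1 N, wgt N i d ≠ 0 := by
  by_contra hall
  push_neg at hall
  apply hd
  have key : ∀ k : ℕ, ∀ hk : k < N, d ⟨k, hk⟩ = 0 := by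
    intro k
    induction k with
    | zero =>
      intro hk
      have h := hall 1 (by simp [hN])
      rw [wgt_eq N 1 le_rfl hN, dif_neg (by omega)] at h
      have : d ⟨1 - 1, by omega⟩ = d ⟨0, hk⟩ := by congr 1
      omega
    | succ k ih =>
      intro hk
      have h := hall (k + 2) (by simp only [Finset.mem_Icc]; omega)
      rw [wgt_eq N (k + 2) (by omega) (by omega), dif_pos (by omega)] at h
      have hk' : k < N := by omega
      have h0 : d ⟨k + 2 - 2, by omega⟩ = 0 := by
        have h1 := ih hk'
        have : (⟨k + 2 - 2, by omega⟩ : Fin N) = ⟨k, hk'⟩ := by apply Fin.ext; simp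
        rw [this]; exact h1
      have h2 : d ⟨k + 2 - 1, by omega⟩ = d ⟨k + 1, hk⟩ := by congr 1
      omega
  ext j
  have := key (j : ℕ) j.2
  simpa using this

/-- Total degree of an exponent. -/
def deg {N : ℕ} (d : Fin N →₀ ℕ) : ℕ := ∑ j, d j

lemma deg_zero {N : ℕ} : deg (0 : Fin N →₀ ℕ) = 0 := by simp [deg]

lemma deg_eq_zero_iff {N : ℕ} (d : Fin N →₀ ℕ) : deg d = 0 ↔ d = 0 := by
  constructor
  · intro h
    ext j
    have := Finset.sum_eq_zero_iff.mp h j (Finset.mem_univ j)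
    simpa using this
  · rintro rfl; exact deg_zero

lemma eV_ne_zero {N : ℕ} (ℓ : ℕ) (hℓ1 : 1 ≤ ℓ) (hℓN : ℓ ≤ N) : eV N ℓ ≠ 0 := by
  intro h
  have := DFunLike.congr_fun h ⟨ℓ - 1, by omega⟩
  rw [eV_apply] at this
  simp only [Finsupp.coe_zero, Pi.zero_apply] at this
  rw [if_pos (by omega)] at this
  exact one_ne_zero this

lemma deg_sub_lt {N : ℕ} (ℓ : ℕ) (hℓ1 : 1 ≤ ℓ) (hℓN : ℓ ≤ N) (d : Fin N →₀ ℕ)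
    (hle : eV N ℓ ≤ d) : deg (d - eV N ℓ) < deg d := by
  have hj : ∀ j : Fin N, (d - eV N ℓ) j = d j - eV N ℓ j := fun j => Finsupp.tsub_apply d _ j
  have j0 : Fin N := ⟨ℓ - 1, by omega⟩
  apply Finset.sum_lt_sum (s := Finset.univ) (f := fun j => (d - eV N ℓ) j) (g := fun j => d j)
  · intro j _
    rw [hj]
    exact Nat.sub_le _ _
  · obtain ⟨j0, hj0⟩ : ∃ j0 : Fin N, (j0 : ℕ) = ℓ - 1 := ⟨⟨ℓ - 1, by omega⟩, rfl⟩
    refine ⟨j0, Finset.mem_univ _, ?_⟩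
    rw [hj]
    have h1 : eV N ℓ j0 = 1 := by rw [eV_apply, if_pos (by omega)]
    have h2 := Finsupp.le_def.mp hle j0
    rw [h1] at h2
    omega

lemma yt_congr (q : F) {N : ℕ} (f f' : MvPowerSeries (Fin N) F) (d : Fin N →₀ ℕ)
    (ℓ i : ℕ) (ε : ℤ) (hℓ1 : 1 ≤ ℓ) (hℓN : ℓ ≤ N)
    (h : ∀ d' : Fin N →₀ ℕ, deg d' < deg d →
      MvPowerSeries.coeff d' f = MvPowerSeries.coeff d' f') :
    yt q f d ℓ i ε = yt q f' d ℓ i ε := by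
  unfold yt
  split
  · rw [h _ (deg_sub_lt ℓ hℓ1 hℓN d (by assumption))]
  · rfl

lemma Rd_congr (q : F) (s : ℕ → F) {N : ℕ} (hN : 1 ≤ N) (f f' : MvPowerSeries (Fin N) F)
    (d : Fin N →₀ ℕ)
    (h : ∀ d' : Fin N →₀ ℕ, deg d' < deg d →
      MvPowerSeries.coeff d' f = MvPowerSeries.coeff d' f') :
    Rd q s N f d = Rd q s N f' d := by
  unfold Rd
  congr 1
  · congr 1
    · apply Finset.sum_congr rfl
      intro i hi
      simp only [Finset.mem_Icc] at hi
      rw [yt_congr q f f' d i i 1 hi.1 (by omega) h]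
    · rw [yt_congr q f f' d N N 1 hN le_rfl h]
  · apply Finset.sum_congr rfl
    intro i hi
    simp only [Finset.mem_Icc] at hi
    rw [yt_congr q f f' d (i - 1) i (-1) (by omega) (by omega) h]

lemma Rd_zero (q : F) (s : ℕ → F) {N : ℕ} (hN : 1 ≤ N) (f : MvPowerSeries (Fin N) F) :
    Rd q s N f 0 = 0 := by
  have hyt : ∀ ℓ i : ℕ, ∀ ε : ℤ, 1 ≤ ℓ → ℓ ≤ N → yt q f (0 : Fin N →₀ ℕ) ℓ i ε = 0 := by
    intro ℓ i ε h1 h2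
    unfold yt
    rw [if_neg]
    intro hle
    exact eV_ne_zero ℓ h1 h2 (by ext j; exact Nat.le_zero.mp (Finsupp.le_def.mp hle j))
  unfold Rd
  rw [Finset.sum_eq_zero, Finset.sum_eq_zero, hyt N N 1 hN le_rfl]
  · ring
  · intro i hi
    simp only [Finset.mem_Icc] at hi
    rw [hyt (i - 1) i (-1) (by omega) (by omega)]; ring
  · intro i hi
    simp only [Finset.mem_Icc] at hi
    rw [hyt i i 1 hi.1 (by omega)]; ring

/-- The recursive construction of the coefficients, stratified by total degree. -/
def Gaux (q : F) (s : ℕ → F) (N : ℕ) : ℕ → (Fin N →₀ ℕ) → F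
  | 0 => fun d => if d = 0 then 1 else 0
  | (n + 1) => fun d =>
      if deg d ≤ n then Gaux q s N n d
      else (Ad q s N d - Ev s N)⁻¹ * Rd q s N (Gaux q s N n) d

/-- The candidate eigenfunction. -/
def gB (q : F) (s : ℕ → F) (N : ℕ) : MvPowerSeries (Fin N) F :=
  fun d => Gaux q s N (deg d) d

lemma Gaux_stable (q : F) (s : ℕ → F) (N : ℕ) :
    ∀ n : ℕ, ∀ d : Fin N →₀ ℕ, deg d ≤ n → Gaux q s N n d = gB q s N d := by
  intro n
  induction n with
  | zero =>
    intro d hd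
    have h0 : deg d = 0 := Nat.le_zero.mp hd
    rw [gB, h0]
  | succ n ih =>
    intro d hd
    by_cases h : deg d ≤ n
    · simp only [Gaux]
      rw [if_pos h]
      exact ih d h
    · have : deg d = n + 1 := by omega
      rw [gB, this]

lemma gB_coeff_zero (q : F) (s : ℕ → F) (N : ℕ) :
    MvPowerSeries.coeff (0 : Fin N →₀ ℕ) (gB q s N) = 1 := by
  show Gaux q s N (deg (0 : Fin N →₀ ℕ)) 0 = 1
  rw [deg_zero]
  simp [Gaux]

lemma gB_spec (q : F) (s : ℕ → F) (N : ℕ) (hN : 1 ≤ N) (d : Fin N →₀ ℕ) (hd : d ≠ 0) :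
    MvPowerSeries.coeff d (gB q s N)
      = (Ad q s N d - Ev s N)⁻¹ * Rd q s N (gB q s N) d := by
  have h0 : deg d ≠ 0 := fun h => hd ((deg_eq_zero_iff d).mp h)
  obtain ⟨n, hn⟩ : ∃ n, deg d = n + 1 := ⟨deg d - 1, by omega⟩
  have : MvPowerSeries.coeff d (gB q s N) = Gaux q s N (n + 1) d := by
    show Gaux q s N (deg d) d = _
    rw [hn]
  rw [this]
  simp only [Gaux]
  rw [if_neg (by omega)]
  congr 1
  apply Rd_congr q s hN
  intro d' hd'
  have : deg d' ≤ n := by omega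
  exact Gaux_stable q s N n d' this

/-- Abstract existence and uniqueness, given nonvanishing of the eigenvalue differences. -/
theorem existsUnique_abstract (q : F) (s : ℕ → F) (N : ℕ) (hN : 1 ≤ N)
    (hA : ∀ d : Fin N →₀ ℕ, d ≠ 0 → Ad q s N d - Ev s N ≠ 0) :
    ∃! f : MvPowerSeries (Fin N) F,
      MvPowerSeries.coeff 0 f = 1 ∧ DB q s N f = (Ev s N) • f := by
  have key : ∀ f : MvPowerSeries (Fin N) F,
      (DB q s N f = (Ev s N) • f ↔
        ∀ d : Fin N →₀ ℕ, (Ad q s N d - Ev s N) * MvPowerSeries.coeff d f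
          = Rd q s N f d) := by
    intro f
    rw [MvPowerSeries.ext_iff]
    constructor
    · intro h d
      have h1 := h d
      rw [DB_coeff, MvPowerSeries.coeff_smul] at h1
      linear_combination h1
    · intro h d
      have h1 := h d
      rw [DB_coeff, MvPowerSeries.coeff_smul]
      linear_combination h1
  refine ⟨gB q s N, ⟨gB_coeff_zero q s N, ?_⟩, ?_⟩
  · rw [key]
    intro d
    by_cases hd : d = 0
    · subst hd
      rw [Ad_zero q s N hN, sub_self, zero_mul, Rd_zero q s hN]
    · rw [gB_spec q s N hN d hd, ← mul_assoc, mul_inv_cancel₀ (hA d hd), one_mul]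
  · rintro f ⟨hf0, hfe⟩
    rw [key] at hfe
    have hg0 := gB_coeff_zero q s N
    have hge : ∀ d : Fin N →₀ ℕ, (Ad q s N d - Ev s N) * MvPowerSeries.coeff d (gB q s N)
        = Rd q s N (gB q s N) d := by
      intro d
      by_cases hd : d = 0
      · subst hd
        rw [Ad_zero q s N hN, sub_self, zero_mul, Rd_zero q s hN]
      · rw [gB_spec q s N hN d hd, ← mul_assoc, mul_inv_cancel₀ (hA d hd), one_mul]
    apply MvPowerSeries.ext
    have main : ∀ n : ℕ, ∀ d : Fin N →₀ ℕ, deg d ≤ n →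
        MvPowerSeries.coeff d f = MvPowerSeries.coeff d (gB q s N) := by
      intro n
      induction n with
      | zero =>
        intro d hd
        have : d = 0 := (deg_eq_zero_iff d).mp (Nat.le_zero.mp hd)
        subst this
        rw [hf0, hg0]
      | succ n ih =>
        intro d hd
        by_cases h0 : d = 0
        · subst h0; rw [hf0, hg0]
        · have hR : Rd q s N f d = Rd q s N (gB q s N) d := by
            apply Rd_congr q s hN
            intro d' hd'
            exact ih d' (by omega)
          have h1 := hfe d
          have h2 := hge d
          rw [hR] at h1
          exact mul_left_cancel₀ (hA d h0) (h1.trans h2.symm)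
    intro d
    exact main (deg d) d le_rfl

/-- Index embedding `{0, …, N} → Fin (N + 1)`. -/
def fi (N : ℕ) (i : ℕ) : Fin (N + 1) := ⟨i % (N + 1), Nat.mod_lt _ (Nat.succ_pos N)⟩

lemma fi_val (N i : ℕ) (h : i ≤ N) : ((fi N i) : ℕ) = i := Nat.mod_eq_of_lt (by omega)

lemma qP_eq (N : ℕ) :
    qP N = algebraMap (MvPolynomial (Fin (N + 1)) ℚ) (K N) (MvPolynomial.X (fi N 0)) := by
  have h : fi N 0 = ⟨0, Nat.succ_pos N⟩ := Fin.ext (fi_val N 0 (Nat.zero_le N))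
  rw [qP, h]

lemma sP_eq (N i : ℕ) (h1 : 1 ≤ i) (h2 : i ≤ N) :
    sP N i = algebraMap (MvPolynomial (Fin (N + 1)) ℚ) (K N) (MvPolynomial.X (fi N i)) := by
  have h : fi N i = ⟨i, Nat.lt_succ_of_le h2⟩ := Fin.ext (fi_val N i h2)
  rw [sP, dif_pos h2, h]

lemma fi_ne (N i : ℕ) (h1 : 1 ≤ i) (h2 : i ≤ N) : fi N i ≠ fi N 0 := by
  intro h
  have h1 := fi_val N i h2
  have h0 := fi_val N 0 (Nat.zero_le N)
  rw [h] at h1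
  omega

lemma algInj (N : ℕ) :
    Function.Injective (algebraMap (MvPolynomial (Fin (N + 1)) ℚ) (K N)) :=
  IsFractionRing.injective _ _

lemma qP_ne_zero (N : ℕ) : qP N ≠ 0 := by
  rw [qP_eq]
  exact fun h => MvPolynomial.X_ne_zero _ (algInj N (by rw [h, map_zero]))

lemma sP_ne_zero (N i : ℕ) (h1 : 1 ≤ i) (h2 : i ≤ N) : sP N i ≠ 0 := by
  rw [sP_eq N i h1 h2]
  exact fun h => MvPolynomial.X_ne_zero _ (algInj N (by rw [h, map_zero]))

lemma pow_ineq (M t : ℕ) (ht : t ≤ M) :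
    (2 : ℚ) ^ M + 2 ^ M ≤ 2 ^ (M + t) + 2 ^ (M - t)
      ∧ (1 ≤ t → (2 : ℚ) ^ M + 2 ^ M < 2 ^ (M + t) + 2 ^ (M - t)) := by
  have e1 : (2 : ℚ) ^ (M + t) = 2 ^ (M - t) * 2 ^ t * 2 ^ t := by
    rw [mul_assoc, ← pow_add, ← pow_add]
    congr 1
    omega
  have e2 : (2 : ℚ) ^ M = 2 ^ (M - t) * 2 ^ t := by
    rw [← pow_add]
    congr 1
    omega
  have key : (2 : ℚ) ^ (M + t) + 2 ^ (M - t) - 2 ^ M - 2 ^ M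
      = 2 ^ (M - t) * ((2 : ℚ) ^ t - 1) ^ 2 := by
    rw [e1, e2]; ring
  constructor
  · have h0 : (0 : ℚ) ≤ 2 ^ (M - t) * ((2 : ℚ) ^ t - 1) ^ 2 := by positivity
    linarith [key]
  · intro ht1
    have h2 : (2 : ℚ) ≤ 2 ^ t := by
      calc (2 : ℚ) = 2 ^ 1 := (pow_one 2).symm
        _ ≤ 2 ^ t := by
          apply pow_le_pow_right₀ (by norm_num) ht1
    have h0 : (0 : ℚ) < 2 ^ (M - t) * ((2 : ℚ) ^ t - 1) ^ 2 := by
      apply mul_pos (by positivity)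
      have : (1 : ℚ) ≤ 2 ^ t - 1 := by linarith
      nlinarith
    linarith [key]

set_option maxHeartbeats 1000000 in
lemma Ad_sub_Ev_ne (N : ℕ) (hN : 1 ≤ N) (d : Fin N →₀ ℕ) (hd : d ≠ 0) :
    Ad (qP N) (sP N) N d - Ev (sP N) N ≠ 0 := by
  set w : ℕ → ℤ := fun i => wgt N i d with hw
  set M : ℕ := ∑ i ∈ Finset.Icc 1 N, (w i).natAbs with hM
  have hMb : ∀ i ∈ Finset.Icc 1 N, (w i).natAbs ≤ M := by
    intro i hi
    exact Finset.single_le_sum (f := fun j => (w j).natAbs) (fun j _ => Nat.zero_le _) hi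
  obtain ⟨i0, hi0, hw0⟩ := exists_wgt_ne N hN d hd
  set ι := algebraMap (MvPolynomial (Fin (N + 1)) ℚ) (K N) with hι
  set qq := qP N with hqq
  set a : ℕ → ℕ := fun i => ((M : ℤ) + w i).toNat with ha
  set c : ℕ → ℕ := fun i => ((M : ℤ) - w i).toNat with hc
  set PV : ℕ → MvPolynomial (Fin (N + 1)) ℚ :=
    fun i => ∏ j ∈ (Finset.Icc 1 N).erase i, MvPolynomial.X (fi N j) with hPV
  set Pexpr : MvPolynomial (Fin (N + 1)) ℚ := ∑ i ∈ Finset.Icc 1 N,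
    ((MvPolynomial.X (fi N i)) ^ 2 * PV i
        * ((MvPolynomial.X (fi N 0)) ^ (a i) - (MvPolynomial.X (fi N 0)) ^ M)
      + PV i * ((MvPolynomial.X (fi N 0)) ^ (c i) - (MvPolynomial.X (fi N 0)) ^ M)) with hP
  -- Step 1: Pexpr ≠ 0 via evaluation
  have hPne : Pexpr ≠ 0 := by
    set v : Fin (N + 1) → ℚ := fun k => if k = fi N 0 then 2 else 1 with hv
    have hv0 : MvPolynomial.eval v (MvPolynomial.X (fi N 0)) = 2 := by
      rw [MvPolynomial.eval_X]
      simp [hv]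
    have hv1 : ∀ j, 1 ≤ j → j ≤ N → MvPolynomial.eval v (MvPolynomial.X (fi N j)) = 1 := by
      intro j hj1 hj2
      rw [MvPolynomial.eval_X]
      simp only [hv]
      rw [if_neg (fi_ne N j hj1 hj2)]
    have hvPV : ∀ i, MvPolynomial.eval v (PV i) = 1 := by
      intro i
      rw [hPV, map_prod]
      apply Finset.prod_eq_one
      intro j hj
      rw [Finset.mem_erase, Finset.mem_Icc] at hj
      exact hv1 j hj.2.1 hj.2.2
    have heval : MvPolynomial.eval v Pexpr
        = ∑ i ∈ Finset.Icc 1 N, ((2 : ℚ) ^ (a i) + 2 ^ (c i) - 2 ^ M - 2 ^ M) := by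
      rw [hP, map_sum]
      apply Finset.sum_congr rfl
      intro i hi
      rw [Finset.mem_Icc] at hi
      simp only [map_add, map_mul, map_sub, map_pow, hv0, hvPV, hv1 i hi.1 hi.2]
      ring
    have hterm : ∀ i ∈ Finset.Icc 1 N,
        (0 : ℚ) ≤ (2 : ℚ) ^ (a i) + 2 ^ (c i) - 2 ^ M - 2 ^ M := by
      intro i hi
      have hb := hMb i hi
      set t := (w i).natAbs with htdef
      have hcase : (a i = M + t ∧ c i = M - t) ∨ (a i = M - t ∧ c i = M + t) := by
        rw [ha, hc]
        simp only []
        omega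
      have := (pow_ineq M t hb).1
      rcases hcase with ⟨h1, h2⟩ | ⟨h1, h2⟩ <;> rw [h1, h2] <;> linarith
    have hterm0 : (0 : ℚ) < (2 : ℚ) ^ (a i0) + 2 ^ (c i0) - 2 ^ M - 2 ^ M := by
      have hb := hMb i0 hi0
      set t := (w i0).natAbs with htdef
      have hww : w i0 ≠ 0 := hw0
      have ht1 : 1 ≤ t := by
        rw [htdef]
        omega
      have hcase : (a i0 = M + t ∧ c i0 = M - t) ∨ (a i0 = M - t ∧ c i0 = M + t) := by
        rw [ha, hc]
        simp only []
        omega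
      have := (pow_ineq M t hb).2 ht1
      rcases hcase with ⟨h1, h2⟩ | ⟨h1, h2⟩ <;> rw [h1, h2] <;> linarith
    intro h0
    have : MvPolynomial.eval v Pexpr = 0 := by rw [h0, map_zero]
    rw [heval] at this
    have hpos : (0 : ℚ) < ∑ i ∈ Finset.Icc 1 N,
        ((2 : ℚ) ^ (a i) + 2 ^ (c i) - 2 ^ M - 2 ^ M) :=
      Finset.sum_pos' hterm ⟨i0, hi0, hterm0⟩
    rw [this] at hpos
    exact lt_irrefl 0 hpos
  -- Step 2: the clearing identity
  have hq : qq ≠ 0 := qP_ne_zero N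
  have hidentity : ι Pexpr
      = (Ad (qP N) (sP N) N d - Ev (sP N) N)
        * (qq ^ M * ∏ j ∈ Finset.Icc 1 N, sP N j) := by
    rw [Ad_Icc _ _ N hN, Ev, ← Finset.sum_sub_distrib, Finset.sum_mul, hP, map_sum]
    apply Finset.sum_congr rfl
    intro i hi
    rw [Finset.mem_Icc] at hi
    have hsi : sP N i ≠ 0 := sP_ne_zero N i hi.1 hi.2
    have hPVi : ι (PV i) = ∏ j ∈ (Finset.Icc 1 N).erase i, sP N j := by
      rw [hPV, map_prod]
      apply Finset.prod_congr rfl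
      intro j hj
      rw [Finset.mem_erase, Finset.mem_Icc] at hj
      rw [sP_eq N j hj.2.1 hj.2.2]
    have hprod : ∏ j ∈ Finset.Icc 1 N, sP N j
        = sP N i * ∏ j ∈ (Finset.Icc 1 N).erase i, sP N j :=
      (Finset.mul_prod_erase _ _ (Finset.mem_Icc.mpr hi)).symm
    have hb := hMb i (Finset.mem_Icc.mpr hi)
    have e1 : qq ^ (a i) = qq ^ M * qq ^ (w i) := by
      have h1 : ((a i : ℕ) : ℤ) = (M : ℤ) + w i := by
        rw [ha]
        simp only []
        omega
      calc qq ^ (a i) = qq ^ ((a i : ℕ) : ℤ) := (zpow_natCast qq (a i)).symm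
        _ = qq ^ ((M : ℤ) + w i) := by rw [h1]
        _ = qq ^ ((M : ℤ)) * qq ^ (w i) := zpow_add₀ hq _ _
        _ = qq ^ M * qq ^ (w i) := by rw [zpow_natCast]
    have e2 : qq ^ (c i) = qq ^ M * qq ^ (-(w i)) := by
      have h1 : ((c i : ℕ) : ℤ) = (M : ℤ) + (-(w i)) := by
        rw [hc]
        simp only []
        omega
      calc qq ^ (c i) = qq ^ ((c i : ℕ) : ℤ) := (zpow_natCast qq (c i)).symm
        _ = qq ^ ((M : ℤ) + (-(w i))) := by rw [h1]
        _ = qq ^ ((M : ℤ)) * qq ^ (-(w i)) := zpow_add₀ hq _ _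
        _ = qq ^ M * qq ^ (-(w i)) := by rw [zpow_natCast]
    simp only [map_add, map_mul, map_sub, map_pow, hPVi]
    rw [← sP_eq N i hi.1 hi.2, ← qP_eq N, ← hqq, hprod, e1, e2]
    linear_combination ((1 : K N) - qq ^ (-(w i)))
      * (∏ j ∈ (Finset.Icc 1 N).erase i, sP N j) * qq ^ M * mul_inv_cancel₀ hsi
  -- Step 3: conclude
  intro hzero
  rw [hzero, zero_mul] at hidentity
  exact hPne (algInj N (by rw [hidentity, map_zero]))

end QToda

namespace QToda

/-- Definition 2.6 well-posedness.  There exists a unique formal power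
series `f ∈ Λ^{B_N} = ℚ(q,s)[[y₁,…,y_N]]` with constant term `1` satisfying the eigenvalue
equation `D^{B_N Toda}(x|s|q) f = Σ_{i=1}^N (sᵢ + sᵢ⁻¹) f`. -/
theorem exists_unique_BToda (N : ℕ) (hN : 1 ≤ N) :
    ∃! f : MvPowerSeries (Fin N) (K N),
      MvPowerSeries.coeff 0 f = 1 ∧
      DB (qP N) (sP N) N f
        = (∑ i ∈ Finset.Icc 1 N, (sP N i + (sP N i)⁻¹)) • f := by
  have h := existsUnique_abstract (qP N) (sP N) N hN (fun d hd => Ad_sub_Ev_ne N hN d hd)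
  rw [show Ev (sP N) N = ∑ i ∈ Finset.Icc 1 N, (sP N i + (sP N i)⁻¹) from rfl] at h
  exact h

end QToda
end
end

section
/- Let K be a field (e.g. ℂ), let s₁, …, s_N ∈ K be nonzero and pairwise distinct, and let a₁, …, a_{N−1} ∈ K be arbitrary. Then ∏_{i=1}^{N−1} a_i = Σ_{k=1}^N (s_k/s_N) · [∏_{i=1}^{N−1} (1 − a_i s_k/s_i)] / [∏_{1≤i≤N, i≠k} (1 − s_k/s_i)]. -/
open scoped BigOperators
open Polynomial

lemma my_leadingCoeff_basisDivisor {K : Type*} [Field K] (x y : K) :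
    (Lagrange.basisDivisor x y).leadingCoeff = (x - y)⁻¹ := by
  rw [Lagrange.basisDivisor, leadingCoeff_mul, leadingCoeff_C,
    (monic_X_sub_C y).leadingCoeff, mul_one]

lemma my_coeff_basis {K : Type*} [Field K] (t : Finset ℕ) (v : ℕ → K)
    (hinj : Set.InjOn v t) {i : ℕ} (hi : i ∈ t) :
    (Lagrange.basis t v i).coeff (t.card - 1) = ∏ j ∈ t.erase i, (v i - v j)⁻¹ := by
  rw [← Lagrange.natDegree_basis hinj hi, coeff_natDegree, Lagrange.basis,
    leadingCoeff_prod]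
  exact Finset.prod_congr rfl fun j _ => my_leadingCoeff_basisDivisor _ _

/-- Key Lagrange-type lemma: sum of `P(v k) / ∏_{j≠k} (v k - v j)` is the
coefficient of degree `card - 1`. -/
lemma my_key {K : Type*} [Field K] (t : Finset ℕ) (v : ℕ → K)
    (hinj : Set.InjOn v t) (P : K[X]) (hd : P.degree < t.card) :
    ∑ k ∈ t, P.eval (v k) / ∏ j ∈ t.erase k, (v k - v j) = P.coeff (t.card - 1) := by
  conv_rhs => rw [Lagrange.eq_interpolate hinj hd]
  rw [Lagrange.interpolate_apply, finset_sum_coeff]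
  refine Finset.sum_congr rfl fun k hk => ?_
  rw [coeff_C_mul, my_coeff_basis t v hinj hk, div_eq_mul_inv, Finset.prod_inv_distrib]

lemma my_natDegree_prod_linear {K : Type*} [Field K] (t : Finset ℕ) (b c : ℕ → K) :
    (∏ i ∈ t, (C (b i) + C (c i) * X)).natDegree ≤ t.card := by
  refine le_trans (Polynomial.natDegree_prod_le _ _) ?_
  calc ∑ i ∈ t, (C (b i) + C (c i) * X).natDegree ≤ ∑ i ∈ t, 1 := by
        refine Finset.sum_le_sum fun i _ => ?_
        refine le_trans (natDegree_add_le _ _) ?_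
        simp only [natDegree_C, max_le_iff]
        exact ⟨Nat.zero_le _, le_trans (natDegree_C_mul_le _ _) (by simp)⟩
    _ = t.card := by simp

lemma my_prod_neg {K : Type*} [CommRing K] (t : Finset ℕ) (f : ℕ → K) :
    ∏ i ∈ t, (-(f i)) = (-1 : K) ^ t.card * ∏ i ∈ t, f i := by
  have h : ∀ i ∈ t, -(f i) = (-1 : K) * f i := fun i _ => by ring
  rw [Finset.prod_congr rfl h, Finset.prod_mul_distrib, Finset.prod_const]

lemma my_coeff_prod_linear {K : Type*} [Field K] (t : Finset ℕ) (b c : ℕ → K) :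
    (∏ i ∈ t, (C (b i) + C (c i) * X)).coeff t.card = ∏ i ∈ t, c i := by
  classical
  induction t using Finset.induction_on with
  | empty => simp
  | @insert x u hx ih =>
      rw [Finset.prod_insert hx, Finset.prod_insert hx, Finset.card_insert_of_notMem hx,
        add_mul, coeff_add, coeff_C_mul, mul_assoc, coeff_C_mul, coeff_X_mul,
        Polynomial.coeff_eq_zero_of_natDegree_lt
          (lt_of_le_of_lt (my_natDegree_prod_linear u b c) (Nat.lt_succ_self _)),
        mul_zero, zero_add, ih]

/-- partial-fraction identity, eq. (3.3).  For a field `K`, nonzero and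
pairwise distinct `s₁, …, s_N ∈ K` and arbitrary `a₁, …, a_{N-1} ∈ K`,
`∏_{i=1}^{N-1} a_i = Σ_{k=1}^N (s_k/s_N) ∏_{i=1}^{N-1} (1 - a_i s_k/s_i)
  / ∏_{1 ≤ i ≤ N, i ≠ k} (1 - s_k/s_i)`. -/
theorem partial_fraction_identity {K : Type*} [Field K] (N : ℕ) (hN : 1 ≤ N)
    (s a : ℕ → K)
    (hs0 : ∀ i ∈ Finset.Icc 1 N, s i ≠ 0)
    (hsd : ∀ i ∈ Finset.Icc 1 N, ∀ j ∈ Finset.Icc 1 N, i ≠ j → s i ≠ s j) :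
    ∏ i ∈ Finset.Icc 1 (N - 1), a i =
      ∑ k ∈ Finset.Icc 1 N, (s k / s N) *
        ((∏ i ∈ Finset.Icc 1 (N - 1), (1 - a i * s k / s i)) /
          ∏ i ∈ (Finset.Icc 1 N).erase k, (1 - s k / s i)) := by
  classical
  set t : Finset ℕ := Finset.Icc 1 N with ht
  set u : Finset ℕ := Finset.Icc 1 (N - 1) with hu
  have hcardt : t.card = N := by simp [ht]
  have hcardu : u.card = N - 1 := by simp [hu]
  have hNt : N ∈ t := by simp [ht]; omega
  have hut : u ⊆ t := by
    intro i hi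
    simp only [ht, hu, Finset.mem_Icc] at *
    omega
  have hsN : s N ≠ 0 := hs0 N hNt
  have hinj : Set.InjOn s ↑t := by
    intro i hi j hj hij
    by_contra hne
    exact hsd i (Finset.mem_coe.mp hi) j (Finset.mem_coe.mp hj) hne hij
  set P : K[X] := ∏ i ∈ u, (C (1 : K) + C (-(a i / s i)) * X) with hP
  have hPdeg : P.degree < (t.card : WithBot ℕ) := by
    refine lt_of_le_of_lt P.degree_le_natDegree ?_
    rw [Nat.cast_lt]
    refine lt_of_le_of_lt (my_natDegree_prod_linear u _ _) ?_
    rw [hcardu, hcardt]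
    omega
  have hPeval : ∀ k, P.eval (s k) = ∏ i ∈ u, (1 - a i * s k / s i) := by
    intro k
    rw [hP, eval_prod]
    refine Finset.prod_congr rfl fun i _ => ?_
    simp only [eval_add, eval_mul, eval_C, eval_X]
    rw [neg_mul, div_mul_eq_mul_div]
    ring
  have hPcoeff : P.coeff (N - 1) = (-1 : K) ^ (N - 1) * ∏ i ∈ u, (a i / s i) := by
    rw [hP, ← hcardu, my_coeff_prod_linear]
    rw [hcardu, ← hcardu, my_prod_neg]
  -- product of s over t
  have hTprod : ∏ i ∈ t, s i = (∏ i ∈ u, s i) * s N := by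
    have : t = Finset.Icc 1 ((N - 1) + 1) := by rw [ht]; congr 1; omega
    rw [this, Finset.prod_Icc_succ_top (by omega), ← hu]
    congr 2
    omega
  have hsq : ((-1 : K) ^ (N - 1)) * ((-1 : K) ^ (N - 1)) = 1 := by
    rw [← pow_add]
    exact Even.neg_one_pow ⟨N - 1, rfl⟩
  have hterm : ∀ k ∈ t, s k / s N *
      ((∏ i ∈ u, (1 - a i * s k / s i)) / ∏ i ∈ t.erase k, (1 - s k / s i)) =
      ((-1 : K) ^ (N - 1) * ∏ i ∈ u, s i) *
        (P.eval (s k) / ∏ j ∈ t.erase k, (s k - s j)) := by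
    intro k hk
    have hk0 : s k ≠ 0 := hs0 k hk
    have h1 : ∏ i ∈ t.erase k, (1 - s k / s i) =
        (∏ i ∈ t.erase k, (s i - s k)) / ∏ i ∈ t.erase k, s i := by
      rw [← Finset.prod_div_distrib]
      exact Finset.prod_congr rfl fun i hi =>
        one_sub_div (hs0 i (Finset.mem_of_mem_erase hi))
    have h2 : ∏ i ∈ t.erase k, (s i - s k) =
        (-1 : K) ^ (N - 1) * ∏ i ∈ t.erase k, (s k - s i) := by
      have : ∀ i ∈ t.erase k, s i - s k = -(s k - s i) := fun i _ => by ring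
      rw [Finset.prod_congr rfl this, my_prod_neg,
        Finset.card_erase_of_mem hk, hcardt]
    have h3 : s k * ∏ i ∈ t.erase k, s i = (∏ i ∈ u, s i) * s N := by
      rw [Finset.mul_prod_erase t s hk, hTprod]
    have hD : ∏ i ∈ t.erase k, (s k - s i) ≠ 0 := by
      refine Finset.prod_ne_zero_iff.mpr fun i hi => ?_
      have hik : i ≠ k := Finset.ne_of_mem_erase hi
      have hit : i ∈ t := Finset.mem_of_mem_erase hi
      exact sub_ne_zero_of_ne (hsd k hk i hit (Ne.symm hik))
    have hE : ∏ i ∈ t.erase k, s i ≠ 0 :=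
      Finset.prod_ne_zero_iff.mpr fun i hi => hs0 i (Finset.mem_of_mem_erase hi)
    rw [hPeval, h1, h2]
    set E := ∏ i ∈ u, (1 - a i * s k / s i) with hEdef
    set D := ∏ i ∈ t.erase k, (s k - s i) with hDdef
    set Ee := ∏ i ∈ t.erase k, s i with hEedef
    set m := (-1 : K) ^ (N - 1) with hm
    have hm0 : m ≠ 0 := pow_ne_zero _ (neg_ne_zero.mpr one_ne_zero)
    field_simp
    linear_combination E * h3 - E * (∏ i ∈ u, s i) * s N * hsq
  calc ∏ i ∈ u, a i
      = ((-1 : K) ^ (N - 1) * ∏ i ∈ u, s i) * P.coeff (t.card - 1) := by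
        rw [hcardt, hPcoeff]
        have hps : (∏ i ∈ u, s i) * ∏ i ∈ u, (a i / s i) = ∏ i ∈ u, a i := by
          rw [← Finset.prod_mul_distrib]
          exact Finset.prod_congr rfl fun i hi => by
            rw [mul_comm, div_mul_cancel₀ _ (hs0 i (hut hi))]
        calc ∏ i ∈ u, a i
            = (((-1 : K) ^ (N - 1)) * ((-1 : K) ^ (N - 1))) *
                ((∏ i ∈ u, s i) * ∏ i ∈ u, (a i / s i)) := by rw [hsq, one_mul, hps]
          _ = ((-1 : K) ^ (N - 1) * ∏ i ∈ u, s i) *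
                ((-1 : K) ^ (N - 1) * ∏ i ∈ u, (a i / s i)) := by ring
    _ = ∑ k ∈ t, ((-1 : K) ^ (N - 1) * ∏ i ∈ u, s i) *
          (P.eval (s k) / ∏ j ∈ t.erase k, (s k - s j)) := by
        rw [← Finset.mul_sum, my_key t s hinj P hPdeg]
    _ = ∑ k ∈ t, s k / s N *
          ((∏ i ∈ u, (1 - a i * s k / s i)) / ∏ i ∈ t.erase k, (1 - s k / s i)) :=
        (Finset.sum_congr rfl fun k hk => (hterm k hk).symm)
end

section
/- Let a₁, …, a_{N−1} ∈ ℂ and let s₁, …, s_N ∈ ℂ be pairwise distinct. Define F(s) := Σ_{k=1}^N [∏_{i=1}^{N−1} (s_i − a_i s_k)] / [∏_{1≤i≤N, i≠k} (s_i − s_k)]. Then for any indices ℓ ≠ ℓ′, the residue of F in the variable s_ℓ at the point s_ℓ = s_{ℓ′} vanishes: lim_{s_ℓ → s_{ℓ′}} F(s)·(s_ℓ − s_{ℓ′}) = 0 (the other variables s_i, i ≠ ℓ, being held fixed, pairwise distinct, and distinct from s_{ℓ′}). Consequently F, as a rational function of s_ℓ, has no pole at s_ℓ = s_{ℓ′}.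 -/
open scoped BigOperators

noncomputable section

/-- The function `F` of the variable `s_ℓ = z` (the other `s_i` held fixed):
`F(s) = Σ_{k=1}^N ∏_{i=1}^{N-1} (s_i - a_i s_k) / ∏_{1≤i≤N, i≠k} (s_i - s_k)`. -/
def Fres (N : ℕ) (a s : ℕ → ℂ) (ℓ : ℕ) (z : ℂ) : ℂ :=
  ∑ k ∈ Finset.Icc 1 N,
    (∏ i ∈ Finset.Icc 1 (N - 1),
        ((if i = ℓ then z else s i) - a i * (if k = ℓ then z else s k)))
      / ∏ i ∈ (Finset.Icc 1 N).erase k,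
          ((if i = ℓ then z else s i) - (if k = ℓ then z else s k))

/-- Numerator of the `k`-th term of `Fres`, as a function of `z`. -/
def Fnum (N : ℕ) (a s : ℕ → ℂ) (ℓ k : ℕ) (z : ℂ) : ℂ :=
  ∏ i ∈ Finset.Icc 1 (N - 1), ((if i = ℓ then z else s i) - a i * (if k = ℓ then z else s k))

/-- Denominator of the `k`-th term of `Fres`, as a function of `z`. -/
def Fden (N : ℕ) (s : ℕ → ℂ) (ℓ k : ℕ) (z : ℂ) : ℂ :=
  ∏ i ∈ (Finset.Icc 1 N).erase k, ((if i = ℓ then z else s i) - (if k = ℓ then z else s k))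

lemma Fres_eq (N : ℕ) (a s : ℕ → ℂ) (ℓ : ℕ) (z : ℂ) :
    Fres N a s ℓ z = ∑ k ∈ Finset.Icc 1 N, Fnum N a s ℓ k z / Fden N s ℓ k z := rfl

lemma ite_diff (s : ℕ → ℂ) (i ℓ : ℕ) :
    Differentiable ℂ (fun z : ℂ => if i = ℓ then z else s i) := by
  split_ifs
  · exact differentiable_id
  · exact differentiable_const _

lemma Fnum_diff (N : ℕ) (a s : ℕ → ℂ) (ℓ k : ℕ) :
    Differentiable ℂ (fun z => Fnum N a s ℓ k z) := by
  apply Differentiable.fun_finsetProd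
  intro i _
  exact (ite_diff s i ℓ).sub ((ite_diff s k ℓ).const_mul _)

lemma Fden_diff (N : ℕ) (s : ℕ → ℂ) (ℓ k : ℕ) :
    Differentiable ℂ (fun z => Fden N s ℓ k z) := by
  apply Differentiable.fun_finsetProd
  intro i _
  exact (ite_diff s i ℓ).sub (ite_diff s k ℓ)

/-- residue computation in the proof of Proposition 3.1.  For any
`ℓ ≠ ℓ'`, the residue of `F` in the variable `s_ℓ` at `s_ℓ = s_{ℓ'}` vanishes:
`lim_{s_ℓ → s_{ℓ'}} F(s)(s_ℓ - s_{ℓ'}) = 0`, the other variables `s_i` (`i ≠ ℓ`) being held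
fixed and pairwise distinct.  Consequently `F`, as a rational function of `s_ℓ`, has no pole
at `s_ℓ = s_{ℓ'}`: it tends to a finite limit there. -/
theorem residue_vanishes (N : ℕ) (a s : ℕ → ℂ) (ℓ ℓ' : ℕ)
    (hℓ : ℓ ∈ Finset.Icc 1 N) (hℓ' : ℓ' ∈ Finset.Icc 1 N) (hne : ℓ ≠ ℓ')
    (hdist : ∀ i ∈ Finset.Icc 1 N, ∀ j ∈ Finset.Icc 1 N,
      i ≠ ℓ → j ≠ ℓ → i ≠ j → s i ≠ s j) :
    Filter.Tendsto (fun z : ℂ => Fres N a s ℓ z * (z - s ℓ'))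
      (nhdsWithin (s ℓ') {s ℓ'}ᶜ) (nhds 0)
    ∧ ∃ L : ℂ, Filter.Tendsto (fun z : ℂ => Fres N a s ℓ z)
        (nhdsWithin (s ℓ') {s ℓ'}ᶜ) (nhds L) := by
  classical
  set c : ℂ := s ℓ' with hc
  set S : Finset ℕ := ((Finset.Icc 1 N).erase ℓ).erase ℓ' with hS
  set Q : ℂ → ℂ := fun z => ∏ i ∈ S, (s i - z) with hQdef
  set R : ℂ := Q c with hR
  set g : ℂ → ℂ := fun z => Fnum N a s ℓ ℓ' z * Q z - Fnum N a s ℓ ℓ z * R with hgdef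
  have hℓ'mem : ℓ' ∈ (Finset.Icc 1 N).erase ℓ := Finset.mem_erase.2 ⟨hne.symm, hℓ'⟩
  have hℓmem : ℓ ∈ (Finset.Icc 1 N).erase ℓ' := Finset.mem_erase.2 ⟨hne, hℓ⟩
  have hSmem : ∀ k ∈ S, k ∈ Finset.Icc 1 N ∧ k ≠ ℓ ∧ k ≠ ℓ' := by
    intro k hk
    rw [hS] at hk
    have h1 := Finset.mem_erase.1 hk
    have h2 := Finset.mem_erase.1 h1.2
    exact ⟨h2.2, h2.1, h1.1⟩
  have hQdiff : Differentiable ℂ Q := by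
    apply Differentiable.fun_finsetProd
    intro i _
    exact (differentiable_const _).sub differentiable_id
  have hRne : R ≠ 0 := by
    rw [hR, hQdef]
    apply Finset.prod_ne_zero_iff.2
    intro i hi
    obtain ⟨hiT, hiℓ, hiℓ'⟩ := hSmem i hi
    exact sub_ne_zero.2 (hdist i hiT ℓ' hℓ' hiℓ hne.symm hiℓ')
  -- denominator factorizations
  have hDenℓ : ∀ z : ℂ, Fden N s ℓ ℓ z = (c - z) * Q z := by
    intro z
    have h1 : Fden N s ℓ ℓ z = ∏ i ∈ (Finset.Icc 1 N).erase ℓ, (s i - z) := by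
      unfold Fden
      apply Finset.prod_congr rfl
      intro i hi
      have : i ≠ ℓ := (Finset.mem_erase.1 hi).1
      simp [this]
    rw [h1, ← Finset.mul_prod_erase _ _ hℓ'mem, ← hS, ← hc]
  have hDenℓ' : ∀ z : ℂ, Fden N s ℓ ℓ' z = (z - c) * R := by
    intro z
    have h1 : Fden N s ℓ ℓ' z
        = ∏ i ∈ (Finset.Icc 1 N).erase ℓ', ((if i = ℓ then z else s i) - c) := by
      unfold Fden
      apply Finset.prod_congr rfl
      intro i _
      simp [hne.symm, ← hc]
    rw [h1, ← Finset.mul_prod_erase _ _ hℓmem, if_pos rfl]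
    have h2 : ∏ i ∈ ((Finset.Icc 1 N).erase ℓ').erase ℓ, ((if i = ℓ then z else s i) - c)
        = ∏ i ∈ ((Finset.Icc 1 N).erase ℓ').erase ℓ, (s i - c) := by
      apply Finset.prod_congr rfl
      intro i hi
      rw [if_neg (Finset.mem_erase.1 hi).1]
    rw [h2, Finset.erase_right_comm, ← hS]
  -- g vanishes at c
  have hnum_eq : Fnum N a s ℓ ℓ' c = Fnum N a s ℓ ℓ c := by
    unfold Fnum
    apply Finset.prod_congr rfl
    intro i _
    simp [hne.symm, ← hc]
  have hgc : g c = 0 := by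
    rw [hgdef]
    simp only
    rw [hnum_eq, ← hR]
    ring
  have hgdiff : Differentiable ℂ g :=
    ((Fnum_diff N a s ℓ ℓ').mul hQdiff).sub ((Fnum_diff N a s ℓ ℓ).mul_const R)
  -- slope limit
  have hslope : Filter.Tendsto (fun z => g z / (z - c)) (nhdsWithin c {c}ᶜ)
      (nhds (deriv g c)) := by
    have h := hasDerivAt_iff_tendsto_slope.1 ((hgdiff c).hasDerivAt)
    refine h.congr fun z => ?_
    rw [slope_def_field, hgc, sub_zero]
  have hQt : Filter.Tendsto Q (nhdsWithin c {c}ᶜ) (nhds R) := by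
    rw [hR]
    exact (hQdiff.continuous.tendsto c).mono_left nhdsWithin_le_nhds
  -- limit of the regular part of the sum
  have hsum : Filter.Tendsto (fun z => ∑ k ∈ S, Fnum N a s ℓ k z / Fden N s ℓ k z)
      (nhdsWithin c {c}ᶜ) (nhds (∑ k ∈ S, Fnum N a s ℓ k c / Fden N s ℓ k c)) := by
    apply tendsto_finset_sum
    intro k hk
    obtain ⟨hkT, hkℓ, hkℓ'⟩ := hSmem k hk
    have hDc : Fden N s ℓ k c ≠ 0 := by
      unfold Fden
      apply Finset.prod_ne_zero_iff.2
      intro i hi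
      obtain ⟨hik, hiT⟩ := Finset.mem_erase.1 hi
      rw [if_neg hkℓ]
      by_cases hiℓ : i = ℓ
      · rw [if_pos hiℓ]
        exact sub_ne_zero.2 (hdist ℓ' hℓ' k hkT hne.symm hkℓ (fun h => hkℓ' h.symm))
      · rw [if_neg hiℓ]
        exact sub_ne_zero.2 (hdist i hiT k hkT hiℓ hkℓ hik)
    exact (((Fnum_diff N a s ℓ k).continuous.tendsto c).div
      ((Fden_diff N s ℓ k).continuous.tendsto c) hDc).mono_left nhdsWithin_le_nhds
  -- limit of the singular part
  have h2nd : Filter.Tendsto (fun z => (g z / (z - c)) / (Q z * R)) (nhdsWithin c {c}ᶜ)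
      (nhds (deriv g c / (R * R))) :=
    hslope.div (hQt.mul_const R) (mul_ne_zero hRne hRne)
  -- eventual equality
  have hzc : ∀ᶠ z in nhdsWithin c {c}ᶜ, z ≠ c := by
    filter_upwards [self_mem_nhdsWithin] with z hz
    exact hz
  have hev : ∀ᶠ z in nhdsWithin c {c}ᶜ,
      Fres N a s ℓ z = (∑ k ∈ S, Fnum N a s ℓ k z / Fden N s ℓ k z)
        + (g z / (z - c)) / (Q z * R) := by
    filter_upwards [hzc, hQt.eventually_ne hRne] with z hz hQz
    have hz' : z - c ≠ 0 := sub_ne_zero.2 hz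
    have hcz : c - z ≠ 0 := sub_ne_zero.2 (Ne.symm hz)
    have key : Fnum N a s ℓ ℓ z / Fden N s ℓ ℓ z + Fnum N a s ℓ ℓ' z / Fden N s ℓ ℓ' z
        = (g z / (z - c)) / (Q z * R) := by
      rw [hDenℓ z, hDenℓ' z, hgdef]
      field_simp
      ring
    rw [Fres_eq, ← Finset.add_sum_erase _ _ hℓ, ← Finset.add_sum_erase _ _ hℓ'mem, ← hS,
      ← add_assoc, key, add_comm]
  refine ⟨?_, ⟨(∑ k ∈ S, Fnum N a s ℓ k c / Fden N s ℓ k c) + deriv g c / (R * R), ?_⟩⟩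
  case refine_2 =>
    exact (hsum.add h2nd).congr' (Filter.EventuallyEq.symm hev)
  case refine_1 =>
    have hL := (hsum.add h2nd).congr' (Filter.EventuallyEq.symm hev)
    have hzero : Filter.Tendsto (fun z : ℂ => z - c) (nhdsWithin c {c}ᶜ) (nhds 0) := by
      have : Filter.Tendsto (fun z : ℂ => z - c) (nhds c) (nhds (c - c)) :=
        (continuous_id.sub continuous_const).tendsto c
      simpa using this.mono_left nhdsWithin_le_nhds
    simpa using hL.mul hzero
end
end

section
/- Let N ≥ 2 and let θ = (θ_{i,j}) be an N×N strictly upper triangular matrix with nonnegative integer entries. Then, in ℚ(q, s₁, …, s_N), the coefficient c^{Toda}_N factorizes as c^{Toda}_N((θ_{i,j})_{1≤i<j≤N}; (s_i)_{1≤i≤N}; q) = d^{Toda}_N((θ_{i,N})_{1≤i≤N−1}; (s_i)_{1≤i≤N}; q) · c^{Toda}_{N−1}((θ_{i,j})_{1≤i<j≤N−1}; (q^{−θ_{i,N}} s_i)_{1≤i≤N−1}; q), where d^{Toda}_N(θ; s; q) := ∏_{i=1}^{N−1} [1/(q;q)_{θ_i}] · [q^{θ_i}/(q s_N/s_i; q)_{θ_i}]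 · ∏_{1≤i<j≤N−1} [1/(q s_j/s_i; q)_{θ_i}] · [q^{θ_i}/(q^{θ_j−θ_i+1} s_i/s_j; q)_{θ_i}]. -/
open scoped BigOperators

noncomputable section

attribute [local instance] Classical.propDecidable

namespace QToda


private lemma shift_arg {F : Type*} [Field F] {q : F} (hq : q ≠ 0) (c a b : ℤ) (x y : F) :
    q ^ (c + (a - b)) * q * y / x = q ^ c * q * (q ^ (-b) * y) / (q ^ (-a) * x) := by
  simp only [div_eq_mul_inv, mul_inv, zpow_add₀ hq, zpow_sub₀ hq, zpow_neg]
  field_simp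

private theorem cToda_fact_gen {F : Type*} [Field F] (q : F) (hq : q ≠ 0) (s : ℕ → F)
    (M : ℕ) (hM : 1 ≤ M) (hs : ∀ i, 1 ≤ i → i ≤ M → s i ≠ 0) (θ : ℕ → ℕ → ℕ) :
    cToda q s (M + 1) θ =
      dToda q s (M + 1) (fun i => θ i (M + 1)) *
        cToda q (shiftAll q s (fun i => θ i (M + 1))) M θ := by
  rw [cToda, Finset.prod_Icc_succ_top (by omega)]
  rw [mul_comm (dToda _ _ _ _)]
  congr 1
  · -- the k ≤ M part equals cToda over M with shifted parameters
    rw [cToda]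
    refine Finset.prod_congr rfl fun k hk => Finset.prod_congr rfl fun p hp => ?_
    rw [Finset.mem_Icc] at hk
    have hsum1 : (∑ a ∈ Finset.Icc (k + 1) (M + 1), ((θ p.1 a : ℤ) - (θ (p.2 + 1) a : ℤ)))
        = (∑ a ∈ Finset.Icc (k + 1) M, ((θ p.1 a : ℤ) - (θ (p.2 + 1) a : ℤ)))
          + ((θ p.1 (M+1) : ℤ) - (θ (p.2+1) (M+1) : ℤ)) :=
      Finset.sum_Icc_succ_top (by omega) _
    have hsum2 : (∑ a ∈ Finset.Icc (k + 1) (M + 1), ((θ p.1 a : ℤ) - (θ p.2 a : ℤ)))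
        = (∑ a ∈ Finset.Icc (k + 1) M, ((θ p.1 a : ℤ) - (θ p.2 a : ℤ)))
          + ((θ p.1 (M+1) : ℤ) - (θ p.2 (M+1) : ℤ)) :=
      Finset.sum_Icc_succ_top (by omega) _
    have e2 : ((θ p.2 k : ℤ) - (θ p.1 k : ℤ)
          - ∑ a ∈ Finset.Icc (k + 1) (M+1), ((θ p.1 a : ℤ) - (θ p.2 a : ℤ)))
        = ((θ p.2 k : ℤ) - (θ p.1 k : ℤ)
          - ∑ a ∈ Finset.Icc (k + 1) M, ((θ p.1 a : ℤ) - (θ p.2 a : ℤ)))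
          + ((θ p.2 (M+1) : ℤ) - (θ p.1 (M+1) : ℤ)) := by rw [hsum2]; ring
    rw [hsum1, e2, shift_arg hq _ (θ p.1 (M+1) : ℤ) _ (s p.1) (s (p.2+1)),
      shift_arg hq _ (θ p.2 (M+1) : ℤ) _ (s p.2) (s p.1)]
    rfl
  · -- the k = M + 1 factor equals dToda
    have hIccEmpty : Finset.Icc (M + 1 + 1) (M + 1) = (∅ : Finset ℕ) :=
      Finset.Icc_eq_empty (by omega)
    simp only [hIccEmpty, Finset.sum_empty, zpow_zero, one_mul, sub_zero,
      Nat.add_sub_cancel]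
    have memPe : ∀ p : ℕ × ℕ,
        p ∈ (Finset.Icc 1 M ×ˢ Finset.Icc 1 M).filter (fun p : ℕ × ℕ => p.1 ≤ p.2)
          ↔ (1 ≤ p.1 ∧ p.1 ≤ M ∧ 1 ≤ p.2 ∧ p.2 ≤ M ∧ p.1 ≤ p.2) := by
      intro p
      simp only [Finset.mem_filter, Finset.mem_product, Finset.mem_Icc]
      tauto
    rw [Finset.prod_mul_distrib]
    have hA : (∏ p ∈ (Finset.Icc 1 M ×ˢ Finset.Icc 1 M).filter (fun p : ℕ × ℕ => p.1 ≤ p.2),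
          (1 / qPoch q (q * s (p.2 + 1) / s p.1) (θ p.1 (M + 1))))
        = ∏ p ∈ (Finset.Icc 1 M ×ˢ Finset.Icc 1 M).filter (fun p : ℕ × ℕ => p.1 ≤ p.2),
          (1 / qPoch q (q * s (if p.1 = p.2 then M + 1 else p.2) / s p.1) (θ p.1 (M + 1))) := by
      refine Finset.prod_nbij' (fun p => (p.1, if p.2 = M then p.1 else p.2 + 1))
        (fun p => (p.1, if p.2 = p.1 then M else p.2 - 1)) ?_ ?_ ?_ ?_ ?_
      · rintro ⟨p1, p2⟩ hp; rw [memPe] at hp ⊢; dsimp only at hp ⊢; split <;> omega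
      · rintro ⟨p1, p2⟩ hp; rw [memPe] at hp ⊢; dsimp only at hp ⊢; split <;> omega
      · rintro ⟨p1, p2⟩ hp; rw [memPe] at hp; dsimp only at hp ⊢
        rw [Prod.ext_iff]
        refine ⟨rfl, ?_⟩
        dsimp only
        split_ifs <;> omega
      · rintro ⟨p1, p2⟩ hp; rw [memPe] at hp; dsimp only at hp ⊢
        rw [Prod.ext_iff]
        refine ⟨rfl, ?_⟩
        dsimp only
        split_ifs <;> omega
      · rintro ⟨p1, p2⟩ hp; rw [memPe] at hp; dsimp only at hp ⊢
        by_cases h : p2 = M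
        · rw [show (if p2 = M then p1 else p2 + 1) = p1 from if_pos h, if_pos rfl, h]
        · have h2 : ¬ (p1 = p2 + 1) := by omega
          rw [if_neg h, if_neg h2]
    have hB : (∏ p ∈ (Finset.Icc 1 M ×ˢ Finset.Icc 1 M).filter (fun p : ℕ × ℕ => p.1 ≤ p.2),
          (q ^ (θ p.1 (M + 1))
            / qPoch q (q ^ ((θ p.2 (M + 1) : ℤ) - (θ p.1 (M + 1) : ℤ)) * q * s p.1 / s p.2)
              (θ p.1 (M + 1))))
        = ∏ p ∈ (Finset.Icc 1 M ×ˢ Finset.Icc 1 M).filter (fun p : ℕ × ℕ => p.1 ≤ p.2),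
          (q ^ (θ p.1 (M + 1))
            / qPoch q (if p.1 = p.2 then q
                else q ^ ((θ p.2 (M + 1) : ℤ) - (θ p.1 (M + 1) : ℤ) + 1) * s p.1 / s p.2)
              (θ p.1 (M + 1))) := by
      refine Finset.prod_congr rfl fun p hp => ?_
      rw [memPe] at hp
      by_cases h : p.1 = p.2
      · rw [if_pos h, ← h, sub_self, zpow_zero, one_mul, mul_div_assoc,
          div_self (hs p.1 hp.1 hp.2.1), mul_one]
      · rw [if_neg h, zpow_add_one₀ hq]
    rw [hA, hB, ← Finset.prod_mul_distrib]
    have hsplit : (Finset.Icc 1 M ×ˢ Finset.Icc 1 M).filter (fun p : ℕ × ℕ => p.1 ≤ p.2)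
        = (Finset.Icc 1 M ×ˢ Finset.Icc 1 M).filter (fun p : ℕ × ℕ => p.1 = p.2)
          ∪ (Finset.Icc 1 M ×ˢ Finset.Icc 1 M).filter (fun p : ℕ × ℕ => p.1 < p.2) := by
      rw [← Finset.filter_or]
      apply Finset.filter_congr
      intro p _
      constructor
      · intro h; omega
      · intro h; omega
    have hdisj : Disjoint
        ((Finset.Icc 1 M ×ˢ Finset.Icc 1 M).filter (fun p : ℕ × ℕ => p.1 = p.2))
        ((Finset.Icc 1 M ×ˢ Finset.Icc 1 M).filter (fun p : ℕ × ℕ => p.1 < p.2)) := by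
      rw [Finset.disjoint_left]
      intro a ha hb
      rw [Finset.mem_filter] at ha hb
      omega
    rw [hsplit, Finset.prod_union hdisj, dToda]
    simp only [Nat.add_sub_cancel, pairsLT]
    congr 1
    · refine Finset.prod_nbij' (fun p : ℕ × ℕ => p.1) (fun i => (i, i)) ?_ ?_ ?_ ?_ ?_
      · rintro ⟨p1, p2⟩ hp
        simp only [Finset.mem_filter, Finset.mem_product, Finset.mem_Icc] at hp ⊢
        omega
      · intro i hi
        simp only [Finset.mem_Icc] at hi
        simp only [Finset.mem_filter, Finset.mem_product, Finset.mem_Icc]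
        exact ⟨⟨⟨hi.1, hi.2⟩, hi.1, hi.2⟩, trivial⟩
      · rintro ⟨p1, p2⟩ hp
        rw [Finset.mem_filter] at hp
        have : p1 = p2 := hp.2
        simp [this]
      · intro i _; rfl
      · rintro ⟨p1, p2⟩ hp
        rw [Finset.mem_filter] at hp
        have h : p1 = p2 := hp.2
        dsimp only
        rw [if_pos h, if_pos h]
        ring
    · refine Finset.prod_congr rfl fun p hp => ?_
      rw [Finset.mem_filter] at hp
      have h : ¬ (p.1 = p.2) := by omega
      rw [if_neg h, if_neg h]

set_option synthInstance.maxHeartbeats 400000 in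
/-- Notation 2.4, factorization of `c^{Toda}_N`.  For `N ≥ 2` and a
strictly upper triangular nonnegative integer matrix `θ`, in `ℚ(q, s₁, …, s_N)`:
`c^{Toda}_N((θ_{i,j})_{i<j≤N}; (s_i); q)
 = d^{Toda}_N((θ_{i,N})_{i≤N-1}; (s_i); q)
   · c^{Toda}_{N-1}((θ_{i,j})_{i<j≤N-1}; (q^{-θ_{i,N}} s_i); q)`. -/
theorem cToda_factorization (N : ℕ) (hN : 2 ≤ N) (θ : ℕ → ℕ → ℕ) (hθ : UT N θ) :
    cToda (qP N) (sP N) N θ =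
      dToda (qP N) (sP N) N (fun i => θ i N) *
        cToda (qP N) (shiftAll (qP N) (sP N) (fun i => θ i N)) (N - 1) θ := by
  obtain ⟨M, rfl⟩ : ∃ M, N = M + 1 := ⟨N - 1, by omega⟩
  have hinj : Function.Injective
      (algebraMap (MvPolynomial (Fin (M + 1 + 1)) ℚ) (K (M + 1))) :=
    IsFractionRing.injective _ _
  have hq : qP (M + 1) ≠ 0 := by
    rw [qP]
    exact (map_ne_zero_iff _ hinj).mpr (MvPolynomial.X_ne_zero _)
  have hs : ∀ i, 1 ≤ i → i ≤ M → sP (M + 1) i ≠ 0 := by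
    intro i _ h2
    rw [sP, dif_pos (by omega : i ≤ M + 1)]
    exact (map_ne_zero_iff _ hinj).mpr (MvPolynomial.X_ne_zero _)
  have := cToda_fact_gen (qP (M + 1)) hq (sP (M + 1)) M (by omega) hs θ
  simpa [Nat.add_sub_cancel] using this


end QToda
end
end

section
/- Work in K = ℚ(q, s₁, …, s_N). For every θ = (θ₁, …, θ_N) ∈ ℤ_{≥0}^N the following identity of rational functions holds: Σ_{i=1}^N ((1 − q^{−θ_i}) s_i + (1 − q^{θ_i}) s_i^{−1}) = − Σ_{k=1}^N q^{−θ_k} s_k · [∏_{i=1}^N (1 − q^{θ_k} s_i/s_k)(1 − q^{θ_k}/(s_i s_k))] / [∏_{1≤i≤N, i≠k} (1 − q^{θ_k−θ_i} s_i/s_k)(1 − q^{θ_k+θ_i}/(s_i s_k))]. -/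
open scoped BigOperators

noncomputable section

attribute [local instance] Classical.propDecidable

section AuxLagrange
open Polynomial Finset

private lemma lagrange_coeff_sum {F : Type*} [Field F] {ι : Type*} [DecidableEq ι] (T : Finset ι)
    (v : ι → F) (hv : Set.InjOn v T) (f : F[X]) (hf : f.degree < T.card) :
    ∑ i ∈ T, f.eval (v i) / ∏ j ∈ T.erase i, (v i - v j) = f.coeff (T.card - 1) := by
  conv_rhs => rw [Lagrange.eq_interpolate hv hf]
  rw [Lagrange.interpolate_apply, finset_sum_coeff]
  refine Finset.sum_congr rfl fun i hi => ?_
  have hb : (Lagrange.basis T v i).coeff (T.card - 1) = (∏ j ∈ T.erase i, (v i - v j))⁻¹ := by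
    unfold Lagrange.basis Lagrange.basisDivisor
    rw [Finset.prod_mul_distrib, ← map_prod, coeff_C_mul]
    have hm : (∏ j ∈ T.erase i, (X - C (v j))).Monic :=
      monic_prod_of_monic _ _ fun j _ => monic_X_sub_C _
    have hd : (∏ j ∈ T.erase i, (X - C (v j))).natDegree = T.card - 1 := by
      rw [natDegree_prod_of_monic _ _ fun j _ => monic_X_sub_C _]
      simp [Finset.card_erase_of_mem hi]
    rw [← hd]
    rw [← Polynomial.leadingCoeff, hm.leadingCoeff, mul_one, Finset.prod_inv_distrib]
  rw [coeff_C_mul, hb, div_eq_mul_inv]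

private lemma pairsum {F : Type*} [Field F] (x A E G e : F) (hx : x ≠ 0) (hE : E ≠ 0)
    (hG : G ≠ 0) (he : e ≠ 0) (hxx : x * x ≠ 1) :
    A / (E * ((x - x⁻¹) * G)) + (x⁻¹ * x⁻¹ * e * A) / ((x⁻¹ - x) * (e * (E * G)))
      = x * ((x⁻¹ * x⁻¹ * e * A) / (e * (E * G))) := by
  set y := x⁻¹ with hy
  have hxy : x * y = 1 := mul_inv_cancel₀ hx
  have h1 : x - y ≠ 0 := by
    intro h
    rw [sub_eq_zero] at h
    apply hxx
    calc x * x = x * y := by rw [← h]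
    _ = 1 := hxy
  have h2 : y - x ≠ 0 := by
    intro h; apply h1
    rw [sub_eq_zero] at h ⊢; exact h.symm
  clear_value y
  have d1 : E * ((x - y) * G) ≠ 0 := mul_ne_zero hE (mul_ne_zero h1 hG)
  have d2 : (y - x) * (e * (E * G)) ≠ 0 := mul_ne_zero h2 (mul_ne_zero he (mul_ne_zero hE hG))
  have d3 : e * (E * G) ≠ 0 := mul_ne_zero he (mul_ne_zero hE hG)
  rw [div_add_div _ _ d1 d2, ← mul_div_assoc, div_eq_div_iff (mul_ne_zero d1 d2) d3]
  linear_combination (A * e^2 * E^2 * G^2 * (y - x) * (y^2 - 1 - x*y)) * hxy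

private lemma onefac {F : Type*} [Field F] (x a : F) (hx : x ≠ 0) (ha : a ≠ 0) :
    (1 - a / x) * (1 - 1 / (a * x)) = (x⁻¹ * x⁻¹) * ((x - a) * (x - a⁻¹)) := by
  field_simp

private lemma flipfac {F : Type*} [Field F] (x a : F) (hx : x ≠ 0) (ha : a ≠ 0) :
    (x⁻¹ - a) * (x⁻¹ - a⁻¹) = (x⁻¹ * x⁻¹) * ((x - a) * (x - a⁻¹)) := by
  field_simp
  ring

private def emb (N : ℕ) : ℕ ↪ ℕ := ⟨fun x => N + x, fun a b h => Nat.add_left_cancel h⟩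

private lemma emb_apply (N x : ℕ) : emb N x = N + x := rfl

private lemma Tsplit (N : ℕ) :
    Finset.Icc 1 (2*N) = Finset.Icc 1 N ∪ (Finset.Icc 1 N).map (emb N) := by
  ext a
  simp only [Finset.mem_Icc, Finset.mem_union, Finset.mem_map, emb_apply]
  constructor
  · intro h
    by_cases ha : a ≤ N
    · exact Or.inl ⟨h.1, ha⟩
    · exact Or.inr ⟨a - N, by omega, by omega⟩
  · rintro (h | ⟨b, hb, rfl⟩) <;> omega

private lemma Tdisj (N : ℕ) (S₁ S₂ : Finset ℕ) (h₁ : S₁ ⊆ Finset.Icc 1 N)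
    (h₂ : S₂ ⊆ Finset.Icc 1 N) : Disjoint S₁ (S₂.map (emb N)) := by
  rw [Finset.disjoint_left]
  rintro a ha hb
  have h1 := Finset.mem_Icc.1 (h₁ ha)
  obtain ⟨b, hb', rfl⟩ := Finset.mem_map.1 hb
  have h2 := Finset.mem_Icc.1 (h₂ hb')
  simp only [emb_apply] at h1
  omega

private lemma Terase1 (N k : ℕ) (hk : k ∈ Finset.Icc 1 N) :
    (Finset.Icc 1 (2*N)).erase k
      = (Finset.Icc 1 N).erase k ∪ (Finset.Icc 1 N).map (emb N) := by
  rw [Finset.mem_Icc] at hk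
  ext a
  simp only [Finset.mem_erase, Finset.mem_Icc, Finset.mem_union, Finset.mem_map, emb_apply]
  constructor
  · rintro ⟨hne, h⟩
    by_cases ha : a ≤ N
    · exact Or.inl ⟨hne, h.1, ha⟩
    · exact Or.inr ⟨a - N, by omega, by omega⟩
  · rintro (h | ⟨b, hb, rfl⟩) <;> omega

private lemma Terase2 (N k : ℕ) (hk : k ∈ Finset.Icc 1 N) :
    (Finset.Icc 1 (2*N)).erase (N + k)
      = Finset.Icc 1 N ∪ ((Finset.Icc 1 N).erase k).map (emb N) := by
  rw [Finset.mem_Icc] at hk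
  ext a
  simp only [Finset.mem_erase, Finset.mem_Icc, Finset.mem_union, Finset.mem_map, emb_apply]
  constructor
  · rintro ⟨hne, h⟩
    by_cases ha : a ≤ N
    · exact Or.inl ⟨h.1, ha⟩
    · exact Or.inr ⟨a - N, by omega, by omega⟩
  · rintro (h | ⟨b, hb, rfl⟩) <;> omega

private lemma sum_split {F : Type*} [Field F] (N : ℕ) (h : ℕ → F) :
    ∑ a ∈ Finset.Icc 1 (2*N), h a = ∑ k ∈ Finset.Icc 1 N, (h k + h (N + k)) := by
  rw [Tsplit N, Finset.sum_union (Tdisj N _ _ subset_rfl subset_rfl)]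
  rw [Finset.sum_map, Finset.sum_add_distrib]
  rfl

private lemma prod_split {F : Type*} [Field F] (N : ℕ) (h : ℕ → F) :
    ∏ a ∈ Finset.Icc 1 (2*N), h a = ∏ k ∈ Finset.Icc 1 N, (h k * h (N + k)) := by
  rw [Tsplit N, Finset.prod_union (Tdisj N _ _ subset_rfl subset_rfl)]
  rw [Finset.prod_map, Finset.prod_mul_distrib]
  rfl

private lemma prod_erase1 {F : Type*} [Field F] (N k : ℕ) (hk : k ∈ Finset.Icc 1 N) (h : ℕ → F) :
    ∏ j ∈ (Finset.Icc 1 (2*N)).erase k, h j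
      = (∏ j ∈ (Finset.Icc 1 N).erase k, h j) * ∏ j ∈ Finset.Icc 1 N, h (N + j) := by
  rw [Terase1 N k hk, Finset.prod_union (Tdisj N _ _ (Finset.erase_subset _ _) subset_rfl),
    Finset.prod_map]
  rfl

private lemma prod_erase2 {F : Type*} [Field F] (N k : ℕ) (hk : k ∈ Finset.Icc 1 N) (h : ℕ → F) :
    ∏ j ∈ (Finset.Icc 1 (2*N)).erase (N + k), h j
      = (∏ j ∈ Finset.Icc 1 N, h j) * ∏ j ∈ (Finset.Icc 1 N).erase k, h (N + j) := by
  rw [Terase2 N k hk, Finset.prod_union (Tdisj N _ _ subset_rfl (Finset.erase_subset _ _)),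
    Finset.prod_map]
  rfl

variable {F : Type*} [Field F]

private lemma key_identity (N : ℕ) (u s : ℕ → F)
    (hu0 : ∀ i ∈ Finset.Icc 1 N, u i ≠ 0)
    (hs0 : ∀ i ∈ Finset.Icc 1 N, s i ≠ 0)
    (huu : ∀ i ∈ Finset.Icc 1 N, ∀ j ∈ Finset.Icc 1 N, i ≠ j → u i ≠ u j)
    (hu1 : ∀ i ∈ Finset.Icc 1 N, ∀ j ∈ Finset.Icc 1 N, u i * u j ≠ 1) :
    ∑ k ∈ Finset.Icc 1 N, u k *
      ((∏ i ∈ Finset.Icc 1 N, ((1 - s i / u k) * (1 - 1 / (s i * u k)))) /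
       ∏ i ∈ (Finset.Icc 1 N).erase k, ((1 - u i / u k) * (1 - 1 / (u i * u k))))
    = (∑ k ∈ Finset.Icc 1 N, (u k + (u k)⁻¹)) - ∑ i ∈ Finset.Icc 1 N, (s i + (s i)⁻¹) := by
  rcases Nat.eq_zero_or_pos N with hN | hN
  · subst hN; simp
  have hNN : 1 ≤ N := hN
  set w : ℕ → F := fun i => if i ≤ N then u i else (u (i - N))⁻¹ with hw
  set ws : ℕ → F := fun i => if i ≤ N then s i else (s (i - N))⁻¹ with hws
  have hw1 : ∀ k ∈ Finset.Icc 1 N, w k = u k := by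
    intro k hk; rw [Finset.mem_Icc] at hk
    simp only [hw]; rw [if_pos hk.2]
  have hw2 : ∀ k ∈ Finset.Icc 1 N, w (N + k) = (u k)⁻¹ := by
    intro k hk; rw [Finset.mem_Icc] at hk
    simp only [hw]; rw [if_neg (show ¬ (N + k ≤ N) by omega), show N + k - N = k by omega]
  have hws1 : ∀ k ∈ Finset.Icc 1 N, ws k = s k := by
    intro k hk; rw [Finset.mem_Icc] at hk
    simp only [hws]; rw [if_pos hk.2]
  have hws2 : ∀ k ∈ Finset.Icc 1 N, ws (N + k) = (s k)⁻¹ := by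
    intro k hk; rw [Finset.mem_Icc] at hk
    simp only [hws]; rw [if_neg (show ¬ (N + k ≤ N) by omega), show N + k - N = k by omega]
  -- injectivity of the node map
  have hInj : Set.InjOn w (Finset.Icc 1 (2*N) : Finset ℕ) := by
    intro a ha b hb hab
    rw [Finset.mem_coe, Finset.mem_Icc] at ha hb
    have hmem : ∀ c : ℕ, 1 ≤ c → c ≤ 2*N → ¬ c ≤ N → c - N ∈ Finset.Icc 1 N := by
      intro c h1 h2 h3; rw [Finset.mem_Icc]; omega
    by_cases ha' : a ≤ N <;> by_cases hb' : b ≤ N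
    · have haI : a ∈ Finset.Icc 1 N := Finset.mem_Icc.2 ⟨ha.1, ha'⟩
      have hbI : b ∈ Finset.Icc 1 N := Finset.mem_Icc.2 ⟨hb.1, hb'⟩
      simp only [hw, if_pos ha', if_pos hb'] at hab
      by_contra hne
      exact huu a haI b hbI hne hab
    · exfalso
      have haI : a ∈ Finset.Icc 1 N := Finset.mem_Icc.2 ⟨ha.1, ha'⟩
      have hbI := hmem b hb.1 hb.2 hb'
      simp only [hw, if_pos ha', if_neg hb'] at hab
      apply hu1 a haI (b - N) hbI
      rw [hab]
      exact inv_mul_cancel₀ (hu0 _ hbI)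
    · exfalso
      have haI := hmem a ha.1 ha.2 ha'
      have hbI : b ∈ Finset.Icc 1 N := Finset.mem_Icc.2 ⟨hb.1, hb'⟩
      simp only [hw, if_neg ha', if_pos hb'] at hab
      apply hu1 b hbI (a - N) haI
      rw [← hab]
      exact inv_mul_cancel₀ (hu0 _ haI)
    · have haI := hmem a ha.1 ha.2 ha'
      have hbI := hmem b hb.1 hb.2 hb'
      simp only [hw, if_neg ha', if_neg hb'] at hab
      have : u (a - N) = u (b - N) := inv_injective hab
      by_contra hne
      exact huu (a - N) haI (b - N) hbI (by omega) this
  -- the polynomials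
  set P : F[X] := ∏ j ∈ Finset.Icc 1 (2*N), (X - C (ws j)) with hP
  set D : F[X] := ∏ j ∈ Finset.Icc 1 (2*N), (X - C (w j)) with hD
  have hPm : P.Monic := monic_prod_of_monic _ _ fun _ _ => monic_X_sub_C _
  have hDm : D.Monic := monic_prod_of_monic _ _ fun _ _ => monic_X_sub_C _
  have hcard : (Finset.Icc 1 (2*N)).card = 2*N := by rw [Nat.card_Icc]; omega
  have hcardN : (Finset.Icc 1 N).card = N := by rw [Nat.card_Icc]; omega
  have hPd : P.natDegree = 2*N := by
    rw [hP, natDegree_prod_of_monic _ _ fun _ _ => monic_X_sub_C _]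
    simp [natDegree_X_sub_C, hcard]
  have hDd : D.natDegree = 2*N := by
    rw [hD, natDegree_prod_of_monic _ _ fun _ _ => monic_X_sub_C _]
    simp [natDegree_X_sub_C, hcard]
  have hdeglt : (P - D).degree < ((Finset.Icc 1 (2*N)).card : ℕ) := by
    have h1 : P.degree = D.degree := by
      rw [degree_eq_natDegree hPm.ne_zero, degree_eq_natDegree hDm.ne_zero, hPd, hDd]
    have h2 := degree_sub_lt h1 hPm.ne_zero (by rw [hPm.leadingCoeff, hDm.leadingCoeff])
    rw [degree_eq_natDegree hPm.ne_zero, hPd] at h2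
    rw [hcard]
    exact_mod_cast h2
  have hL := lagrange_coeff_sum (Finset.Icc 1 (2*N)) w hInj (P - D) hdeglt
  -- coefficient computation
  have hc : (P - D).coeff ((Finset.Icc 1 (2*N)).card - 1)
      = (∑ k ∈ Finset.Icc 1 N, (u k + (u k)⁻¹)) - ∑ i ∈ Finset.Icc 1 N, (s i + (s i)⁻¹) := by
    have hP' : P.coeff (2*N - 1) = -∑ j ∈ Finset.Icc 1 (2*N), ws j := by
      rw [show (2*N - 1) = P.natDegree - 1 by rw [hPd],
        ← nextCoeff_of_natDegree_pos (by rw [hPd]; omega), hP, prod_X_sub_C_nextCoeff]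
    have hD' : D.coeff (2*N - 1) = -∑ j ∈ Finset.Icc 1 (2*N), w j := by
      rw [show (2*N - 1) = D.natDegree - 1 by rw [hDd],
        ← nextCoeff_of_natDegree_pos (by rw [hDd]; omega), hD, prod_X_sub_C_nextCoeff]
    have e1 : ∑ k ∈ Finset.Icc 1 N, (w k + w (N + k)) = ∑ k ∈ Finset.Icc 1 N, (u k + (u k)⁻¹) :=
      Finset.sum_congr rfl fun k hk => by rw [hw1 k hk, hw2 k hk]
    have e2 : ∑ k ∈ Finset.Icc 1 N, (ws k + ws (N + k)) = ∑ k ∈ Finset.Icc 1 N, (s k + (s k)⁻¹) :=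
      Finset.sum_congr rfl fun k hk => by rw [hws1 k hk, hws2 k hk]
    rw [hcard, coeff_sub, hP', hD', sum_split N ws, sum_split N w, e1, e2]
    ring
  rw [sum_split N (fun a => (P - D).eval (w a) / ∏ j ∈ (Finset.Icc 1 (2*N)).erase a, (w a - w j))] at hL
  rw [← hc, ← hL]
  -- per-k identity
  refine Finset.sum_congr rfl fun k hk => ?_
  have hkIcc := Finset.mem_Icc.1 hk
  have hx : u k ≠ 0 := hu0 k hk
  have hxx : u k * u k ≠ 1 := hu1 k hk k hk
  set x := u k with hxdef
  set A : F := ∏ j ∈ Finset.Icc 1 N, ((x - s j) * (x - (s j)⁻¹)) with hA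
  set E : F := ∏ j ∈ (Finset.Icc 1 N).erase k, (x - u j) with hE
  set G : F := ∏ j ∈ (Finset.Icc 1 N).erase k, (x - (u j)⁻¹) with hG
  set e : F := (x⁻¹ * x⁻¹)^(N-1) with he
  have hkT : k ∈ Finset.Icc 1 (2*N) := Finset.mem_Icc.2 (by omega)
  have hNkT : N + k ∈ Finset.Icc 1 (2*N) := Finset.mem_Icc.2 (by omega)
  have hE0 : E ≠ 0 := by
    rw [hE]
    apply Finset.prod_ne_zero_iff.2
    intro j hj
    have hjI := Finset.mem_of_mem_erase hj
    exact sub_ne_zero.2 (huu k hk j hjI (Ne.symm (Finset.mem_erase.1 hj).1))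
  have hG0 : G ≠ 0 := by
    rw [hG]
    apply Finset.prod_ne_zero_iff.2
    intro j hj
    have hjI := Finset.mem_of_mem_erase hj
    refine sub_ne_zero.2 fun hcon => hu1 k hk j hjI ?_
    rw [← hxdef, hcon]
    exact inv_mul_cancel₀ (hu0 j hjI)
  have he0 : e ≠ 0 := pow_ne_zero _ (mul_ne_zero (inv_ne_zero hx) (inv_ne_zero hx))
  have hpow : (x⁻¹ * x⁻¹) ^ N = x⁻¹ * x⁻¹ * e := by
    conv_lhs => rw [show N = (N-1)+1 by omega]
    rw [pow_succ', he]
  -- (a) numerator values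
  have hevalP : ∀ y : F, P.eval y = ∏ j ∈ Finset.Icc 1 N, ((y - s j) * (y - (s j)⁻¹)) := by
    intro y
    rw [hP, eval_prod]
    simp only [eval_sub, eval_X, eval_C]
    rw [prod_split N (fun j => y - ws j)]
    exact Finset.prod_congr rfl fun j hj => by rw [hws1 j hj, hws2 j hj]
  have hDvanish : ∀ a ∈ Finset.Icc 1 (2*N), D.eval (w a) = 0 := by
    intro a ha
    rw [hD, eval_prod]
    exact Finset.prod_eq_zero ha (by simp)
  have hevk : (P - D).eval (w k) = A := by
    rw [eval_sub, hDvanish k hkT, sub_zero, hw1 k hk, hevalP, hA]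
  have hevNk : (P - D).eval (w (N + k)) = x⁻¹ * x⁻¹ * e * A := by
    rw [eval_sub, hDvanish (N + k) hNkT, sub_zero, hw2 k hk, hevalP]
    rw [Finset.prod_congr rfl (fun j hj => flipfac x (s j) hx (hs0 j hj)),
      Finset.prod_mul_distrib, Finset.prod_const, hcardN, ← hA, hpow]
  -- (c) denominator at node k
  have hdenk : ∏ j ∈ (Finset.Icc 1 (2*N)).erase k, (w k - w j) = E * ((x - x⁻¹) * G) := by
    rw [hw1 k hk, prod_erase1 N k hk (fun j => x - w j)]
    have h1 : ∏ j ∈ (Finset.Icc 1 N).erase k, (x - w j) = E := by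
      rw [hE]
      exact Finset.prod_congr rfl fun j hj => by rw [hw1 j (Finset.mem_of_mem_erase hj)]
    have h2 : ∏ j ∈ Finset.Icc 1 N, (x - w (N + j)) = (x - x⁻¹) * G := by
      have e3 : ∏ j ∈ Finset.Icc 1 N, (x - w (N + j)) = ∏ j ∈ Finset.Icc 1 N, (x - (u j)⁻¹) :=
        Finset.prod_congr rfl fun j hj => by rw [hw2 j hj]
      rw [e3, ← Finset.mul_prod_erase _ _ hk, hG]
    rw [h1, h2]
  -- (d) denominator at node N + k
  have hdenNk : ∏ j ∈ (Finset.Icc 1 (2*N)).erase (N + k), (w (N + k) - w j)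
      = (x⁻¹ - x) * (e * (E * G)) := by
    rw [hw2 k hk, prod_erase2 N k hk (fun j => x⁻¹ - w j)]
    have h1 : ∏ j ∈ Finset.Icc 1 N, (x⁻¹ - w j) = (x⁻¹ - x) * ∏ j ∈ (Finset.Icc 1 N).erase k, (x⁻¹ - u j) := by
      have e4 : ∏ j ∈ Finset.Icc 1 N, (x⁻¹ - w j) = ∏ j ∈ Finset.Icc 1 N, (x⁻¹ - u j) :=
        Finset.prod_congr rfl fun j hj => by rw [hw1 j hj]
      rw [e4, ← Finset.mul_prod_erase _ _ hk]
    have h2 : ∏ j ∈ (Finset.Icc 1 N).erase k, (x⁻¹ - w (N + j))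
        = ∏ j ∈ (Finset.Icc 1 N).erase k, (x⁻¹ - (u j)⁻¹) :=
      Finset.prod_congr rfl fun j hj => by rw [hw2 j (Finset.mem_of_mem_erase hj)]
    rw [h1, h2, mul_assoc]
    congr 1
    rw [← Finset.prod_mul_distrib,
      Finset.prod_congr rfl (fun j hj => flipfac x (u j) hx (hu0 j (Finset.mem_of_mem_erase hj))),
      Finset.prod_mul_distrib, Finset.prod_const, Finset.card_erase_of_mem hk, hcardN,
      ← Finset.prod_mul_distrib, ← he]
  -- (e) the term rewrite
  have hnum : ∏ i ∈ Finset.Icc 1 N, ((1 - s i / x) * (1 - 1 / (s i * x)))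
      = x⁻¹ * x⁻¹ * e * A := by
    rw [Finset.prod_congr rfl (fun j hj => onefac x (s j) hx (hs0 j hj)),
      Finset.prod_mul_distrib, Finset.prod_const, hcardN, ← hA, hpow]
  have hden : ∏ i ∈ (Finset.Icc 1 N).erase k, ((1 - u i / x) * (1 - 1 / (u i * x)))
      = e * (E * G) := by
    rw [Finset.prod_congr rfl (fun j hj => onefac x (u j) hx (hu0 j (Finset.mem_of_mem_erase hj))),
      Finset.prod_mul_distrib, Finset.prod_const, Finset.card_erase_of_mem hk, hcardN, ← he]
    congr 1
    rw [hE, hG, ← Finset.prod_mul_distrib]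
  rw [hnum, hden, hevk, hevNk, hdenk, hdenNk]
  exact (pairsum x A E G e hx hE0 hG0 he0 hxx).symm


end AuxLagrange

namespace QToda
section AuxFacts
variable (N : ℕ)

lemma hinj : Function.Injective (algebraMap (MvPolynomial (Fin (N+1)) ℚ) (K N)) :=
  IsFractionRing.injective _ _

lemma hqne : qP N ≠ 0 := by
  rw [qP, Ne, map_eq_zero_iff _ (hinj N)]
  exact MvPolynomial.X_ne_zero _

lemma hsne (i : ℕ) (hi : i ≤ N) : sP N i ≠ 0 := by
  rw [sP, dif_pos hi, Ne, map_eq_zero_iff _ (hinj N)]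
  exact MvPolynomial.X_ne_zero _

lemma hXne (i j : ℕ) (hi1 : 1 ≤ i) (hi : i ≤ N) (hj1 : 1 ≤ j) (hj : j ≤ N) (hij : i ≠ j)
    (a b : ℕ) : qP N ^ a * sP N i ≠ qP N ^ b * sP N j := by
  rw [qP, sP, sP, dif_pos hi, dif_pos hj, ← map_pow, ← map_mul, ← map_pow, ← map_mul]
  intro h
  have h2 := hinj N h
  rw [MvPolynomial.X_pow_eq_monomial, MvPolynomial.X_pow_eq_monomial,
    MvPolynomial.X, MvPolynomial.X, MvPolynomial.monomial_mul, MvPolynomial.monomial_mul,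
    MvPolynomial.monomial_eq_monomial_iff] at h2
  rcases h2 with ⟨h3, -⟩ | ⟨h3, -⟩
  · have h4 := Finsupp.ext_iff.1 h3 ⟨i, Nat.lt_succ_of_le hi⟩
    simp only [Finsupp.coe_add, Pi.add_apply, Finsupp.single_apply] at h4
    simp only [Fin.mk.injEq] at h4
    split_ifs at h4 <;> omega
  · simp at h3

lemma hXne2 (i j : ℕ) (hi1 : 1 ≤ i) (hi : i ≤ N) (hj1 : 1 ≤ j) (hj : j ≤ N)
    (a : ℕ) : sP N i * sP N j ≠ qP N ^ a := by
  rw [qP, sP, sP, dif_pos hi, dif_pos hj, ← map_pow, ← map_mul]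
  intro h
  have h2 := hinj N h
  rw [MvPolynomial.X_pow_eq_monomial, MvPolynomial.X, MvPolynomial.X,
    MvPolynomial.monomial_mul, MvPolynomial.monomial_eq_monomial_iff] at h2
  rcases h2 with ⟨h3, -⟩ | ⟨h3, -⟩
  · have h4 := Finsupp.ext_iff.1 h3 ⟨i, Nat.lt_succ_of_le hi⟩
    simp only [Finsupp.coe_add, Pi.add_apply, Finsupp.single_apply] at h4
    simp only [Fin.mk.injEq] at h4
    split_ifs at h4 <;> omega
  · simp at h3


def uP (N : ℕ) (θ : ℕ → ℕ) (i : ℕ) : K N := (qP N ^ θ i)⁻¹ * sP N i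

lemma uP_inv (N : ℕ) (θ : ℕ → ℕ) (i : ℕ) : (uP N θ i)⁻¹ = qP N ^ θ i * (sP N i)⁻¹ := by
  rw [uP, mul_inv_rev, inv_inv, mul_comm]

end AuxFacts
end QToda

namespace QToda

/-- eq. (3.10).  In `ℚ(q, s₁, …, s_N)`, for `θ ∈ ℤ_{≥0}^N`:
`Σ_{i=1}^N ((1-q^{-θ_i}) s_i + (1-q^{θ_i}) s_i⁻¹)
 = - Σ_{k=1}^N q^{-θ_k} s_k ∏_{i=1}^N (1 - q^{θ_k} s_i/s_k)(1 - q^{θ_k}/(s_i s_k))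
     / ∏_{i≠k} (1 - q^{θ_k-θ_i} s_i/s_k)(1 - q^{θ_k+θ_i}/(s_i s_k))`. -/
theorem rational_identity_typeB (N : ℕ) (θ : ℕ → ℕ) :
    ∑ i ∈ Finset.Icc 1 N,
        ((1 - (qP N) ^ (-(θ i : ℤ))) * sP N i + (1 - (qP N) ^ (θ i : ℤ)) * (sP N i)⁻¹)
    = - ∑ k ∈ Finset.Icc 1 N,
        (qP N) ^ (-(θ k : ℤ)) * sP N k *
          ((∏ i ∈ Finset.Icc 1 N,
              (1 - (qP N) ^ (θ k) * sP N i / sP N k)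
                * (1 - (qP N) ^ (θ k) / (sP N i * sP N k)))
            / ∏ i ∈ (Finset.Icc 1 N).erase k,
                (1 - (qP N) ^ ((θ k : ℤ) - (θ i : ℤ)) * sP N i / sP N k)
                  * (1 - (qP N) ^ ((θ k : ℤ) + (θ i : ℤ)) / (sP N i * sP N k))) := by
  have hq := hqne N
  have hs0 : ∀ i ∈ Finset.Icc 1 N, sP N i ≠ 0 := fun i hi => hsne N i (Finset.mem_Icc.1 hi).2
  have hu0 : ∀ i ∈ Finset.Icc 1 N, uP N θ i ≠ 0 := fun i hi =>
    mul_ne_zero (inv_ne_zero (pow_ne_zero _ hq)) (hs0 i hi)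
  have huu : ∀ i ∈ Finset.Icc 1 N, ∀ j ∈ Finset.Icc 1 N, i ≠ j → uP N θ i ≠ uP N θ j := by
    intro i hi j hj hij h
    rw [Finset.mem_Icc] at hi hj
    rw [uP, uP] at h
    apply hXne N i j hi.1 hi.2 hj.1 hj.2 hij (θ j) (θ i)
    field_simp at h
    linear_combination h
  have hu1 : ∀ i ∈ Finset.Icc 1 N, ∀ j ∈ Finset.Icc 1 N, uP N θ i * uP N θ j ≠ 1 := by
    intro i hi j hj h
    rw [Finset.mem_Icc] at hi hj
    rw [uP, uP] at h
    apply hXne2 N i j hi.1 hi.2 hj.1 hj.2 (θ i + θ j)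
    rw [pow_add]
    field_simp at h
    linear_combination h
  have hkey := key_identity N (uP N θ) (sP N) hu0 hs0 huu hu1
  have hLHS : ∑ i ∈ Finset.Icc 1 N,
      ((1 - (qP N) ^ (-(θ i : ℤ))) * sP N i + (1 - (qP N) ^ (θ i : ℤ)) * (sP N i)⁻¹)
      = (∑ i ∈ Finset.Icc 1 N, (sP N i + (sP N i)⁻¹))
        - ∑ i ∈ Finset.Icc 1 N, (uP N θ i + (uP N θ i)⁻¹) := by
    rw [← Finset.sum_sub_distrib]
    refine Finset.sum_congr rfl fun i hi => ?_
    rw [zpow_neg, zpow_natCast, uP_inv, uP]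
    ring
  have hRHS : ∀ k ∈ Finset.Icc 1 N,
      (qP N) ^ (-(θ k : ℤ)) * sP N k *
        ((∏ i ∈ Finset.Icc 1 N,
            (1 - (qP N) ^ (θ k) * sP N i / sP N k)
              * (1 - (qP N) ^ (θ k) / (sP N i * sP N k)))
          / ∏ i ∈ (Finset.Icc 1 N).erase k,
              (1 - (qP N) ^ ((θ k : ℤ) - (θ i : ℤ)) * sP N i / sP N k)
                * (1 - (qP N) ^ ((θ k : ℤ) + (θ i : ℤ)) / (sP N i * sP N k)))
      = uP N θ k * ((∏ i ∈ Finset.Icc 1 N,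
            ((1 - sP N i / uP N θ k) * (1 - 1 / (sP N i * uP N θ k)))) /
          ∏ i ∈ (Finset.Icc 1 N).erase k,
            ((1 - uP N θ i / uP N θ k) * (1 - 1 / (uP N θ i * uP N θ k)))) := by
    intro k hk
    congr 1
    · rw [zpow_neg, zpow_natCast, uP]
    congr 1
    · refine Finset.prod_congr rfl fun i hi => ?_
      simp only [uP, one_div, div_eq_mul_inv, mul_inv_rev, inv_inv]
      ring
    · refine Finset.prod_congr rfl fun i hi => ?_
      rw [zpow_sub₀ hq, zpow_add₀ hq, zpow_natCast, zpow_natCast]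
      simp only [uP, one_div, div_eq_mul_inv, mul_inv_rev, inv_inv]
      ring
  rw [hLHS, Finset.sum_congr rfl hRHS, hkey]
  ring

end QToda
end
end

section
/- Let Q₁, …, Q_N ∈ ℂ be nonzero and let s₁, …, s_N ∈ ℂ be nonzero and satisfy s_i ≠ s_k and s_i s_k ≠ 1 for all i ≠ k. Then Σ_{i=1}^N ((1 − Q_i) s_i + (1 − Q_i^{−1}) s_i^{−1}) = Σ_{k=1}^N s_k · [∏_{i=1}^N (1 − Q_i s_i/s_k)(1 − Q_i^{−1}/(s_i s_k))] / [∏_{1≤i≤N, i≠k} (1 − s_i/s_k)(1 − 1/(s_i s_k))]. -/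
open scoped BigOperators
open Polynomial Finset

section aux

variable {ι : Type*} [DecidableEq ι]

/-- coefficient of a Lagrange basis polynomial at top degree. -/
lemma coeff_lagrange_basis (s : Finset ι) (v : ι → ℂ) (hvs : Set.InjOn v s)
    {i : ι} (hi : i ∈ s) :
    (Lagrange.basis s v i).coeff (#s - 1) = (∏ j ∈ s.erase i, (v i - v j))⁻¹ := by
  have hfac : Lagrange.basis s v i
      = C (∏ j ∈ s.erase i, (v i - v j)⁻¹) * ∏ j ∈ s.erase i, (X - C (v j)) := by
    unfold Lagrange.basis Lagrange.basisDivisor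
    rw [prod_mul_distrib, ← map_prod]
  have hmonic : (∏ j ∈ s.erase i, (X - C (v j))).Monic :=
    monic_prod_of_monic _ _ fun j _ => monic_X_sub_C (v j)
  have hdeg : (∏ j ∈ s.erase i, (X - C (v j))).natDegree = #s - 1 := by
    rw [natDegree_prod_of_monic (h := fun j _ => monic_X_sub_C (v j))]
    simp [card_erase_of_mem hi]
  rw [hfac, coeff_C_mul, ← hdeg, hmonic.coeff_natDegree, mul_one, prod_inv_distrib]

/-- Sum of evaluations over nodes divided by products of node differences equals
the top-degree-minus-one coefficient, for polynomials of degree < number of nodes. -/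
lemma sum_eval_div_eq_coeff (s : Finset ι) (v : ι → ℂ) (hvs : Set.InjOn v s)
    (F : Polynomial ℂ) (hdeg : F.degree < #s) :
    ∑ k ∈ s, F.eval (v k) / ∏ j ∈ s.erase k, (v k - v j) = F.coeff (#s - 1) := by
  conv_rhs => rw [Lagrange.eq_interpolate hvs hdeg]
  rw [Lagrange.interpolate_apply, finset_sum_coeff]
  refine (Finset.sum_congr rfl fun k hk => ?_).symm
  rw [coeff_C_mul, coeff_lagrange_basis s v hvs hk, div_eq_mul_inv]

/-- Key Lagrange-type identity: for distinct nodes `v k`, `k ∈ s`, and any values `b i`,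
`i ∈ t` with `#t = #s`, the sum of `∏ (v k - b i) / ∏_{j ≠ k} (v k - v j)` equals
`∑ v - ∑ b`. -/
lemma key_identity_s10 (s t : Finset ι) (hcard : #t = #s) (hne : s.Nonempty)
    (v b : ι → ℂ) (hvs : Set.InjOn v s) :
    ∑ k ∈ s, (∏ i ∈ t, (v k - b i)) / ∏ j ∈ s.erase k, (v k - v j)
      = ∑ k ∈ s, v k - ∑ i ∈ t, b i := by
  set F : Polynomial ℂ := ∏ i ∈ t, (X - C (b i)) with hF
  set W : Polynomial ℂ := Lagrange.nodal s v with hW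
  have hFmonic : F.Monic := monic_prod_of_monic _ _ fun i _ => monic_X_sub_C (b i)
  have hFdeg : F.natDegree = #s := by
    rw [hF, natDegree_prod_of_monic (h := fun i _ => monic_X_sub_C (b i))]
    simp [hcard]
  have hWdeg : W.natDegree = #s := Lagrange.natDegree_nodal
  have hdegFW : F.degree = W.degree := by
    rw [degree_eq_natDegree hFmonic.ne_zero, degree_eq_natDegree Lagrange.nodal_monic.ne_zero,
      hFdeg, hWdeg]
  have hsub : (F - W).degree < (#s : ℕ) := by
    have := degree_sub_lt hdegFW hFmonic.ne_zero
      (by rw [hFmonic.leadingCoeff, Lagrange.nodal_monic.leadingCoeff])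
    calc (F - W).degree < F.degree := this
      _ = (#s : ℕ) := by rw [degree_eq_natDegree hFmonic.ne_zero, hFdeg]
  have heval : ∀ k ∈ s, (F - W).eval (v k) = ∏ i ∈ t, (v k - b i) := by
    intro k hk
    rw [eval_sub, Lagrange.eval_nodal_at_node hk, sub_zero, hF, eval_prod]
    simp
  have h1 : ∑ k ∈ s, (∏ i ∈ t, (v k - b i)) / ∏ j ∈ s.erase k, (v k - v j)
      = (F - W).coeff (#s - 1) := by
    rw [← sum_eval_div_eq_coeff s v hvs (F - W) hsub]
    exact Finset.sum_congr rfl fun k hk => by rw [heval k hk]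
  have hc1 : (∏ i ∈ t, (X - C (b i))).coeff (#s - 1) = -∑ i ∈ t, b i := by
    rw [← hcard]
    exact prod_X_sub_C_coeff_card_pred t b (by rw [hcard]; exact hne.card_pos)
  have hc2 : (∏ i ∈ s, (X - C (v i))).coeff (#s - 1) = -∑ i ∈ s, v i :=
    prod_X_sub_C_coeff_card_pred s v hne.card_pos
  rw [h1, coeff_sub, hF, hW, Lagrange.nodal, hc1, hc2]
  ring

end aux

/-- eq. (3.11).  For nonzero `Q₁,…,Q_N ∈ ℂ` and nonzero `s₁,…,s_N ∈ ℂ`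
with `s_i ≠ s_k` and `s_i s_k ≠ 1` for all `i ≠ k`:
`Σ_{i=1}^N ((1-Q_i) s_i + (1-Q_i⁻¹) s_i⁻¹)
 = Σ_{k=1}^N s_k ∏_{i=1}^N (1 - Q_i s_i/s_k)(1 - Q_i⁻¹/(s_i s_k))
     / ∏_{i≠k} (1 - s_i/s_k)(1 - 1/(s_i s_k))`. -/
theorem rational_identity_typeB_complex (N : ℕ) (Q s : ℕ → ℂ)
    (hQ : ∀ i ∈ Finset.Icc 1 N, Q i ≠ 0)
    (hs : ∀ i ∈ Finset.Icc 1 N, s i ≠ 0)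
    (hd : ∀ i ∈ Finset.Icc 1 N, ∀ k ∈ Finset.Icc 1 N, i ≠ k → s i ≠ s k)
    (hp : ∀ i ∈ Finset.Icc 1 N, ∀ k ∈ Finset.Icc 1 N, i ≠ k → s i * s k ≠ 1) :
    ∑ i ∈ Finset.Icc 1 N, ((1 - Q i) * s i + (1 - (Q i)⁻¹) * (s i)⁻¹)
    = ∑ k ∈ Finset.Icc 1 N, s k *
        ((∏ i ∈ Finset.Icc 1 N, (1 - Q i * s i / s k) * (1 - (Q i)⁻¹ / (s i * s k)))
          / ∏ i ∈ (Finset.Icc 1 N).erase k,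
              (1 - s i / s k) * (1 - 1 / (s i * s k))) := by
  rcases Nat.eq_zero_or_pos N with hN | hN
  · subst hN; simp
  obtain ⟨M, rfl⟩ : ∃ M, N = M + 1 := ⟨N - 1, by omega⟩
  set N := M + 1
  set T : Finset ℕ := Finset.Icc 1 N with hT
  have hcardT : #T = N := by rw [hT, Nat.card_Icc]; omega
  set u : ℕ → ℂ := fun i => s i + (s i)⁻¹ with hu
  set b : ℕ → ℂ := fun i => Q i * s i + (Q i * s i)⁻¹ with hb
  have hinj : Set.InjOn u T := by
    intro i hi k hk hik
    by_contra hne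
    have hsi := hs i hi
    have hsk := hs k hk
    have h1 : s i ≠ s k := hd i hi k hk hne
    have h2 : s i * s k ≠ 1 := hp i hi k hk hne
    have key : (s i - s k) * (s i * s k - 1) = 0 := by
      have h3 : s i * s k * (u i - u k) = (s i - s k) * (s i * s k - 1) := by
        rw [hu]; field_simp; ring
      rw [← h3, hik]; ring
    rcases mul_eq_zero.mp key with h | h
    · exact h1 (sub_eq_zero.mp h)
    · exact h2 (sub_eq_zero.mp h)
  -- numerator factor identity
  have hnum : ∀ k ∈ T, ∀ i ∈ T,
      (1 - Q i * s i / s k) * (1 - (Q i)⁻¹ / (s i * s k)) = (u k - b i) / s k := by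
    intro k hk i hi
    have hsi := hs i hi; have hsk := hs k hk; have hQi := hQ i hi
    rw [hu, hb]
    field_simp
    ring
  have hden : ∀ k ∈ T, ∀ i ∈ T.erase k,
      (1 - s i / s k) * (1 - 1 / (s i * s k)) = (u k - u i) / s k := by
    intro k hk i hi
    have hsi := hs i (Finset.mem_of_mem_erase hi); have hsk := hs k hk
    rw [hu]
    field_simp
    ring
  have hLHS : ∀ i ∈ T, (1 - Q i) * s i + (1 - (Q i)⁻¹) * (s i)⁻¹ = u i - b i := by
    intro i hi
    have hsi := hs i hi; have hQi := hQ i hi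
    rw [hu, hb]
    field_simp
    ring
  have hRHS : ∀ k ∈ T, s k *
      ((∏ i ∈ T, (1 - Q i * s i / s k) * (1 - (Q i)⁻¹ / (s i * s k)))
        / ∏ i ∈ T.erase k, (1 - s i / s k) * (1 - 1 / (s i * s k)))
      = (∏ i ∈ T, (u k - b i)) / ∏ j ∈ T.erase k, (u k - u j) := by
    intro k hk
    have hsk := hs k hk
    have hA : (∏ i ∈ T, (1 - Q i * s i / s k) * (1 - (Q i)⁻¹ / (s i * s k)))
        = (∏ i ∈ T, (u k - b i)) / s k ^ N := by
      rw [Finset.prod_congr rfl (hnum k hk), Finset.prod_div_distrib, Finset.prod_const, hcardT]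
    have hcardE : #(T.erase k) = M := by rw [Finset.card_erase_of_mem hk, hcardT]; omega
    have hB : (∏ i ∈ T.erase k, (1 - s i / s k) * (1 - 1 / (s i * s k)))
        = (∏ j ∈ T.erase k, (u k - u j)) / s k ^ M := by
      rw [Finset.prod_congr rfl (hden k hk), Finset.prod_div_distrib, Finset.prod_const, hcardE]
    have hBne : (∏ j ∈ T.erase k, (u k - u j)) ≠ 0 := by
      rw [Finset.prod_ne_zero_iff]
      intro j hj
      have hjT := Finset.mem_of_mem_erase hj
      have hjk : j ≠ k := Finset.ne_of_mem_erase hj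
      exact sub_ne_zero.mpr fun h => hjk (hinj hjT hk h.symm)
    rw [hA, hB]
    have hpow : s k ^ N = s k ^ M * s k := pow_succ (s k) M
    field_simp
    ring
  rw [Finset.sum_congr rfl hLHS, Finset.sum_congr rfl hRHS, Finset.sum_sub_distrib]
  exact (key_identity_s10 T T rfl (by rw [← Finset.card_pos, hcardT]; omega) u b hinj).symm
end

section
/- Let Q₁, …, Q_N ∈ ℂ be nonzero, fix an index ℓ, and let the variables s_i (i ≠ ℓ) be nonzero complex numbers with s_i ≠ s_j and s_i s_j ≠ 1 for i ≠ j (i, j ≠ ℓ). Define F(s) := Σ_{k=1}^N s_k · [∏_{i=1}^N (1 − Q_i s_i/s_k)(1 − Q_i^{−1}/(s_i s_k))] / [∏_{i≠k} (1 − s_i/s_k)(1 − 1/(s_i s_k))] as a function of s_ℓ. Then the residues of F at s_ℓ = 0 and s_ℓ = ∞ are given by lim_{s_ℓ → 0} s_ℓ · F(s) = 1 − Q_ℓ^{−1} and lim_{s_ℓ → ∞} F(s)/s_ℓ = 1 − Q_ℓ. -/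
open scoped BigOperators

noncomputable section

/-- The function `F` of the variable `s_ℓ = z` (the other `s_i` held fixed):
`F(s) = Σ_{k=1}^N s_k ∏_{i=1}^N (1 - Q_i s_i/s_k)(1 - Q_i⁻¹/(s_i s_k))
          / ∏_{i≠k} (1 - s_i/s_k)(1 - 1/(s_i s_k))`. -/
def FresB (N : ℕ) (Q s : ℕ → ℂ) (ℓ : ℕ) (z : ℂ) : ℂ :=
  ∑ k ∈ Finset.Icc 1 N,
    (if k = ℓ then z else s k) *
      ((∏ i ∈ Finset.Icc 1 N,
          (1 - Q i * (if i = ℓ then z else s i) / (if k = ℓ then z else s k))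
            * (1 - (Q i)⁻¹ / ((if i = ℓ then z else s i) * (if k = ℓ then z else s k))))
        / ∏ i ∈ (Finset.Icc 1 N).erase k,
            (1 - (if i = ℓ then z else s i) / (if k = ℓ then z else s k))
              * (1 - 1 / ((if i = ℓ then z else s i) * (if k = ℓ then z else s k))))

/-- One summand of `FresB`. -/
def termB (N : ℕ) (Q s : ℕ → ℂ) (ℓ k : ℕ) (z : ℂ) : ℂ :=
  (if k = ℓ then z else s k) *
      ((∏ i ∈ Finset.Icc 1 N,
          (1 - Q i * (if i = ℓ then z else s i) / (if k = ℓ then z else s k))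
            * (1 - (Q i)⁻¹ / ((if i = ℓ then z else s i) * (if k = ℓ then z else s k))))
        / ∏ i ∈ (Finset.Icc 1 N).erase k,
            (1 - (if i = ℓ then z else s i) / (if k = ℓ then z else s k))
              * (1 - 1 / ((if i = ℓ then z else s i) * (if k = ℓ then z else s k))))

lemma FresB_eq_sum (N : ℕ) (Q s : ℕ → ℂ) (ℓ : ℕ) (z : ℂ) :
    FresB N Q s ℓ z = ∑ k ∈ Finset.Icc 1 N, termB N Q s ℓ k z := rfl

lemma termB_off (N : ℕ) (Q s : ℕ → ℂ) (ℓ k : ℕ) (hkℓ : k ≠ ℓ)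
    (hℓ : ℓ ∈ Finset.Icc 1 N) (z : ℂ) :
    termB N Q s ℓ k z = s k *
      ((((1 - Q ℓ * z / s k) * (1 - (Q ℓ)⁻¹ / (z * s k))) *
          ∏ i ∈ (Finset.Icc 1 N).erase ℓ,
            (1 - Q i * s i / s k) * (1 - (Q i)⁻¹ / (s i * s k)))
        / (((1 - z / s k) * (1 - 1 / (z * s k))) *
          ∏ i ∈ ((Finset.Icc 1 N).erase k).erase ℓ,
            (1 - s i / s k) * (1 - 1 / (s i * s k)))) := by
  have hℓ' : ℓ ∈ (Finset.Icc 1 N).erase k := Finset.mem_erase.mpr ⟨Ne.symm hkℓ, hℓ⟩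
  have hnum : ∏ i ∈ (Finset.Icc 1 N).erase ℓ,
      (1 - Q i * (if i = ℓ then z else s i) / s k)
        * (1 - (Q i)⁻¹ / ((if i = ℓ then z else s i) * s k))
      = ∏ i ∈ (Finset.Icc 1 N).erase ℓ,
      (1 - Q i * s i / s k) * (1 - (Q i)⁻¹ / (s i * s k)) :=
    Finset.prod_congr rfl fun i hi => by rw [if_neg (Finset.ne_of_mem_erase hi)]
  have hden : ∏ i ∈ ((Finset.Icc 1 N).erase k).erase ℓ,
      (1 - (if i = ℓ then z else s i) / s k)
        * (1 - 1 / ((if i = ℓ then z else s i) * s k))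
      = ∏ i ∈ ((Finset.Icc 1 N).erase k).erase ℓ,
      (1 - s i / s k) * (1 - 1 / (s i * s k)) :=
    Finset.prod_congr rfl fun i hi => by rw [if_neg (Finset.ne_of_mem_erase hi)]
  rw [termB, if_neg hkℓ, ← Finset.mul_prod_erase _ _ hℓ, ← Finset.mul_prod_erase _ _ hℓ',
    if_pos rfl, hnum, hden]

lemma termB_diag (N : ℕ) (Q s : ℕ → ℂ) (ℓ : ℕ) (hℓ : ℓ ∈ Finset.Icc 1 N) (z : ℂ) :
    termB N Q s ℓ ℓ z = z *
      ((((1 - Q ℓ * z / z) * (1 - (Q ℓ)⁻¹ / (z * z))) *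
          ∏ i ∈ (Finset.Icc 1 N).erase ℓ,
            (1 - Q i * s i / z) * (1 - (Q i)⁻¹ / (s i * z)))
        / ∏ i ∈ (Finset.Icc 1 N).erase ℓ,
            (1 - s i / z) * (1 - 1 / (s i * z))) := by
  have hnum : ∏ i ∈ (Finset.Icc 1 N).erase ℓ,
      (1 - Q i * (if i = ℓ then z else s i) / z)
        * (1 - (Q i)⁻¹ / ((if i = ℓ then z else s i) * z))
      = ∏ i ∈ (Finset.Icc 1 N).erase ℓ,
      (1 - Q i * s i / z) * (1 - (Q i)⁻¹ / (s i * z)) :=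
    Finset.prod_congr rfl fun i hi => by rw [if_neg (Finset.ne_of_mem_erase hi)]
  have hden : ∏ i ∈ (Finset.Icc 1 N).erase ℓ,
      (1 - (if i = ℓ then z else s i) / z)
        * (1 - 1 / ((if i = ℓ then z else s i) * z))
      = ∏ i ∈ (Finset.Icc 1 N).erase ℓ,
      (1 - s i / z) * (1 - 1 / (s i * z)) :=
    Finset.prod_congr rfl fun i hi => by rw [if_neg (Finset.ne_of_mem_erase hi)]
  rw [termB, if_pos rfl, ← Finset.mul_prod_erase _ _ hℓ, if_pos rfl, hnum, hden]

lemma helperB0 (z q a Np Dp C : ℂ) (hz : z ≠ 0) (hC : C ≠ 0) :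
    a * (z * z - q) * Np / Dp
      = z * (z * ((a * (1 - q / (z * z)) * (Np / C)) / (Dp / C))) := by
  have hc : z * z * C ≠ 0 := mul_ne_zero (mul_ne_zero hz hz) hC
  have hDC : Dp / C ≠ 0 → Dp ≠ 0 := fun h hD => h (by simp [hD])
  rcases eq_or_ne Dp 0 with h | h
  · simp [h]
  · have hD : Dp / C ≠ 0 := div_ne_zero h hC
    field_simp

lemma helperB1 (z sk Ql A B : ℂ) (hz : z ≠ 0) (hsk : sk ≠ 0) :
    z * sk * (((1 - Ql * z / sk) * (z * sk - Ql⁻¹)) * A)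
        / (((1 - z / sk) * (z * sk - 1)) * B)
      = z * (sk * ((((1 - Ql * z / sk) * (1 - Ql⁻¹ / (z * sk))) * A)
          / (((1 - z / sk) * (1 - 1 / (z * sk))) * B))) := by
  have hc : z * sk ≠ 0 := mul_ne_zero hz hsk
  have e1 : (1 : ℂ) - Ql⁻¹ / (z * sk) = (z * sk - Ql⁻¹) / (z * sk) := by
    rw [sub_div, div_self hc]
  have e2 : (1 : ℂ) - 1 / (z * sk) = (z * sk - 1) / (z * sk) := by
    rw [sub_div, div_self hc]
  rw [e1, e2, ← div_div_div_cancel_right₀ hc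
    (z * sk * (((1 - Ql * z / sk) * (z * sk - Ql⁻¹)) * A))
    ((((1 - z / sk)) * (z * sk - 1)) * B)]
  ring

lemma helperB2 (w sk Ql A B : ℂ) (hw : w ≠ 0) (hsk : sk ≠ 0) :
    w * sk * (((w * sk - Ql) * (1 - Ql⁻¹ * w / sk)) * A)
        / (((w * sk - 1) * (1 - w / sk)) * B)
      = (sk * ((((1 - Ql * w⁻¹ / sk) * (1 - Ql⁻¹ / (w⁻¹ * sk))) * A)
          / (((1 - w⁻¹ / sk) * (1 - 1 / (w⁻¹ * sk))) * B))) / w⁻¹ := by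
  have hc : w * sk ≠ 0 := mul_ne_zero hw hsk
  have e1 : (1 : ℂ) - Ql * w⁻¹ / sk = (w * sk - Ql) / (w * sk) := by
    rw [sub_div, div_self hc]
    congr 1
    rw [← div_eq_mul_inv, div_div]
  have e2 : (1 : ℂ) - Ql⁻¹ / (w⁻¹ * sk) = 1 - Ql⁻¹ * w / sk := by
    rw [div_eq_mul_inv, mul_inv, inv_inv]; ring
  have e3 : (1 : ℂ) - w⁻¹ / sk = (w * sk - 1) / (w * sk) := by
    rw [sub_div, div_self hc]
    congr 1
    rw [inv_eq_one_div, div_div]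
  have e4 : (1 : ℂ) - 1 / (w⁻¹ * sk) = 1 - w / sk := by
    rw [div_eq_mul_inv, mul_inv, inv_inv]; ring
  rw [e1, e2, e3, e4, div_inv_eq_mul, ← div_div_div_cancel_right₀ hc
    (w * sk * (((w * sk - Ql) * (1 - Ql⁻¹ * w / sk)) * A))
    (((w * sk - 1) * (1 - w / sk)) * B)]
  ring

/-- Nonvanishing of the constant denominator product. -/
lemma Bne (N : ℕ) (s : ℕ → ℂ) (ℓ k : ℕ) (hk : k ∈ Finset.Icc 1 N) (hkℓ : k ≠ ℓ)
    (hs0 : ∀ i ∈ Finset.Icc 1 N, i ≠ ℓ → s i ≠ 0)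
    (hd : ∀ i ∈ Finset.Icc 1 N, ∀ j ∈ Finset.Icc 1 N,
      i ≠ ℓ → j ≠ ℓ → i ≠ j → s i ≠ s j)
    (hp : ∀ i ∈ Finset.Icc 1 N, ∀ j ∈ Finset.Icc 1 N,
      i ≠ ℓ → j ≠ ℓ → i ≠ j → s i * s j ≠ 1) :
    (∏ i ∈ ((Finset.Icc 1 N).erase k).erase ℓ,
      (1 - s i / s k) * (1 - 1 / (s i * s k))) ≠ 0 := by
  have hsk : s k ≠ 0 := hs0 k hk hkℓ
  apply Finset.prod_ne_zero_iff.mpr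
  intro i hi
  obtain ⟨hiℓ, hi'⟩ := Finset.mem_erase.mp hi
  obtain ⟨hik, hiI⟩ := Finset.mem_erase.mp hi'
  have hsi : s i ≠ 0 := hs0 i hiI hiℓ
  apply mul_ne_zero
  · rw [sub_ne_zero]
    intro h
    exact hd i hiI k hk hiℓ hkℓ hik ((div_eq_one_iff_eq hsk).mp h.symm)
  · rw [sub_ne_zero]
    intro h
    apply hp i hiI k hk hiℓ hkℓ hik
    have h' : 1 / (s i * s k) = 1 := h.symm
    rw [div_eq_one_iff_eq (mul_ne_zero hsi hsk)] at h'
    exact h'.symm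

open Filter in
/-- off-diagonal term, limit at 0. -/
lemma tendsto_off_zero (N : ℕ) (Q s : ℕ → ℂ) (ℓ k : ℕ)
    (hℓ : ℓ ∈ Finset.Icc 1 N) (hk : k ∈ Finset.Icc 1 N) (hkℓ : k ≠ ℓ)
    (hs0 : ∀ i ∈ Finset.Icc 1 N, i ≠ ℓ → s i ≠ 0)
    (hd : ∀ i ∈ Finset.Icc 1 N, ∀ j ∈ Finset.Icc 1 N,
      i ≠ ℓ → j ≠ ℓ → i ≠ j → s i ≠ s j)
    (hp : ∀ i ∈ Finset.Icc 1 N, ∀ j ∈ Finset.Icc 1 N,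
      i ≠ ℓ → j ≠ ℓ → i ≠ j → s i * s j ≠ 1) :
    Tendsto (fun z : ℂ => z * termB N Q s ℓ k z) (nhdsWithin 0 {0}ᶜ) (nhds 0) := by
  have hsk : s k ≠ 0 := hs0 k hk hkℓ
  set A := ∏ i ∈ (Finset.Icc 1 N).erase ℓ,
      (1 - Q i * s i / s k) * (1 - (Q i)⁻¹ / (s i * s k)) with hA
  set B := ∏ i ∈ ((Finset.Icc 1 N).erase k).erase ℓ,
      (1 - s i / s k) * (1 - 1 / (s i * s k)) with hB
  have hBne : B ≠ 0 := Bne N s ℓ k hk hkℓ hs0 hd hp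
  set G : ℂ → ℂ := fun z => z * s k * (((1 - Q ℓ * z / s k) * (z * s k - (Q ℓ)⁻¹)) * A)
      / (((1 - z / s k) * (z * s k - 1)) * B) with hG
  have hkey : Tendsto G (nhds 0) (nhds 0) := by
    have hcont : ContinuousAt G 0 := by
      apply ContinuousAt.div
      · fun_prop
      · fun_prop
      · simp [hBne]
    have := hcont.tendsto
    simpa [hG] using this
  refine Tendsto.congr' ?_ (hkey.mono_left nhdsWithin_le_nhds)
  filter_upwards [self_mem_nhdsWithin] with z hz
  have hz' : z ≠ 0 := hz
  rw [hG]
  rw [termB_off N Q s ℓ k hkℓ hℓ z]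
  exact helperB1 z (s k) (Q ℓ) A B hz' hsk

open Filter in
/-- diagonal term, limit at 0. -/
lemma tendsto_diag_zero (N : ℕ) (Q s : ℕ → ℂ) (ℓ : ℕ)
    (hℓ : ℓ ∈ Finset.Icc 1 N)
    (hQ : ∀ i ∈ Finset.Icc 1 N, Q i ≠ 0)
    (hs0 : ∀ i ∈ Finset.Icc 1 N, i ≠ ℓ → s i ≠ 0) :
    Tendsto (fun z : ℂ => z * termB N Q s ℓ ℓ z) (nhdsWithin 0 {0}ᶜ)
      (nhds (1 - (Q ℓ)⁻¹)) := by
  have hQl : Q ℓ ≠ 0 := hQ ℓ hℓ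
  set E := (Finset.Icc 1 N).erase ℓ with hE
  have hsE : ∀ i ∈ E, s i ≠ 0 := fun i hi =>
    hs0 i (Finset.mem_of_mem_erase hi) (Finset.ne_of_mem_erase hi)
  have hQE : ∀ i ∈ E, Q i ≠ 0 := fun i hi => hQ i (Finset.mem_of_mem_erase hi)
  set Np : ℂ → ℂ := fun z => ∏ i ∈ E, (z - Q i * s i) * (s i * z - (Q i)⁻¹) with hNp
  set Dp : ℂ → ℂ := fun z => ∏ i ∈ E, (z - s i) * (s i * z - 1) with hDp
  set H : ℂ → ℂ := fun z => (1 - Q ℓ) * (z * z - (Q ℓ)⁻¹) * Np z / Dp z with hH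
  have hNcont : Continuous Np := by
    apply continuous_finset_prod
    intro i _
    fun_prop
  have hDcont : Continuous Dp := by
    apply continuous_finset_prod
    intro i _
    fun_prop
  have hP : (∏ i ∈ E, s i) ≠ 0 := Finset.prod_ne_zero_iff.mpr hsE
  have hD0 : Dp 0 = ∏ i ∈ E, s i := by
    rw [hDp]
    exact Finset.prod_congr rfl fun i hi => by ring
  have hN0 : Np 0 = ∏ i ∈ E, s i := by
    rw [hNp]
    refine Finset.prod_congr rfl fun i hi => ?_
    have hQi := hQE i hi
    have he : ((0:ℂ) - Q i * s i) * (s i * 0 - (Q i)⁻¹) = (Q i * (Q i)⁻¹) * s i := by ring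
    rw [he, mul_inv_cancel₀ hQi, one_mul]
  have hD0ne : Dp 0 ≠ 0 := hD0 ▸ hP
  have hkey : Tendsto H (nhds 0) (nhds (1 - (Q ℓ)⁻¹)) := by
    have hcont : ContinuousAt H 0 := by
      apply ContinuousAt.div
      · exact ((by fun_prop : Continuous fun z : ℂ =>
          (1 - Q ℓ) * (z * z - (Q ℓ)⁻¹)).mul hNcont).continuousAt
      · exact hDcont.continuousAt
      · exact hD0ne
    have := hcont.tendsto
    have hval : H 0 = 1 - (Q ℓ)⁻¹ := by
      rw [hH]
      simp only
      rw [hN0, hD0, mul_div_assoc, div_self hP, mul_one]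
      field_simp
      ring
    rwa [hval] at this
  refine Tendsto.congr' ?_ (hkey.mono_left nhdsWithin_le_nhds)
  filter_upwards [self_mem_nhdsWithin] with z hz
  have hz' : z ≠ 0 := hz
  rw [termB_diag N Q s ℓ hℓ z]
  set C := ∏ i ∈ E, (z * z * s i) with hC
  have hCne : C ≠ 0 := Finset.prod_ne_zero_iff.mpr fun i hi =>
    mul_ne_zero (mul_ne_zero hz' hz') (hsE i hi)
  have ha : ∏ i ∈ E, (1 - Q i * s i / z) * (1 - (Q i)⁻¹ / (s i * z)) = Np z / C := by
    rw [hNp, hC, ← Finset.prod_div_distrib]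
    refine Finset.prod_congr rfl fun i hi => ?_
    have hsi := hsE i hi
    have f1 : (1:ℂ) - Q i * s i / z = (z - Q i * s i) / z := by rw [sub_div, div_self hz']
    have f2 : (1:ℂ) - (Q i)⁻¹ / (s i * z) = (s i * z - (Q i)⁻¹) / (s i * z) := by
      rw [sub_div, div_self (mul_ne_zero hsi hz')]
    rw [f1, f2, div_mul_div_comm]
    congr 1
    ring
  have hb : ∏ i ∈ E, (1 - s i / z) * (1 - 1 / (s i * z)) = Dp z / C := by
    rw [hDp, hC, ← Finset.prod_div_distrib]
    refine Finset.prod_congr rfl fun i hi => ?_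
    have hsi := hsE i hi
    have f1 : (1:ℂ) - s i / z = (z - s i) / z := by rw [sub_div, div_self hz']
    have f2 : (1:ℂ) - 1 / (s i * z) = (s i * z - 1) / (s i * z) := by
      rw [sub_div, div_self (mul_ne_zero hsi hz')]
    rw [f1, f2, div_mul_div_comm]
    congr 1
    ring
  have hq : Q ℓ * z / z = Q ℓ := by rw [mul_div_assoc, div_self hz', mul_one]
  rw [ha, hb, hq, hH]
  exact helperB0 z ((Q ℓ)⁻¹) (1 - Q ℓ) (Np z) (Dp z) C hz' hCne

open Filter in
/-- off-diagonal term, limit at ∞. -/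
lemma tendsto_off_inf (N : ℕ) (Q s : ℕ → ℂ) (ℓ k : ℕ)
    (hℓ : ℓ ∈ Finset.Icc 1 N) (hk : k ∈ Finset.Icc 1 N) (hkℓ : k ≠ ℓ)
    (hs0 : ∀ i ∈ Finset.Icc 1 N, i ≠ ℓ → s i ≠ 0)
    (hd : ∀ i ∈ Finset.Icc 1 N, ∀ j ∈ Finset.Icc 1 N,
      i ≠ ℓ → j ≠ ℓ → i ≠ j → s i ≠ s j)
    (hp : ∀ i ∈ Finset.Icc 1 N, ∀ j ∈ Finset.Icc 1 N,
      i ≠ ℓ → j ≠ ℓ → i ≠ j → s i * s j ≠ 1) :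
    Tendsto (fun z : ℂ => termB N Q s ℓ k z / z) (Bornology.cobounded ℂ) (nhds 0) := by
  have hsk : s k ≠ 0 := hs0 k hk hkℓ
  set A := ∏ i ∈ (Finset.Icc 1 N).erase ℓ,
      (1 - Q i * s i / s k) * (1 - (Q i)⁻¹ / (s i * s k)) with hA
  set B := ∏ i ∈ ((Finset.Icc 1 N).erase k).erase ℓ,
      (1 - s i / s k) * (1 - 1 / (s i * s k)) with hB
  have hBne : B ≠ 0 := Bne N s ℓ k hk hkℓ hs0 hd hp
  set G : ℂ → ℂ := fun w => w * s k * (((w * s k - Q ℓ) * (1 - (Q ℓ)⁻¹ * w / s k)) * A)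
      / (((w * s k - 1) * (1 - w / s k)) * B) with hG
  have hkey : Tendsto G (nhdsWithin 0 {0}ᶜ) (nhds 0) := by
    have hcont : ContinuousAt G 0 := by
      apply ContinuousAt.div
      · fun_prop
      · fun_prop
      · simp [hBne]
    have := hcont.tendsto
    have : Tendsto G (nhds 0) (nhds 0) := by simpa [hG] using this
    exact this.mono_left nhdsWithin_le_nhds
  have hcomp : Tendsto (fun z : ℂ => G z⁻¹) (Bornology.cobounded ℂ) (nhds 0) :=
    hkey.comp tendsto_inv₀_cobounded'
  refine Tendsto.congr' ?_ hcomp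
  have hev : ∀ᶠ z : ℂ in Bornology.cobounded ℂ, z ≠ 0 := by
    have h : ({0}ᶜ : Set ℂ) ∈ Bornology.cobounded ℂ :=
      Bornology.isCobounded_def.mp Bornology.isBounded_singleton.compl
    filter_upwards [h] with z hz
    exact hz
  filter_upwards [hev] with z hz
  rw [hG]
  simp only
  rw [termB_off N Q s ℓ k hkℓ hℓ z]
  have := helperB2 z⁻¹ (s k) (Q ℓ) A B (inv_ne_zero hz) hsk
  rw [inv_inv] at this
  exact this

open Filter in
/-- diagonal term, limit at ∞. -/
lemma tendsto_diag_inf (N : ℕ) (Q s : ℕ → ℂ) (ℓ : ℕ)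
    (hℓ : ℓ ∈ Finset.Icc 1 N)
    (hs0 : ∀ i ∈ Finset.Icc 1 N, i ≠ ℓ → s i ≠ 0) :
    Tendsto (fun z : ℂ => termB N Q s ℓ ℓ z / z) (Bornology.cobounded ℂ)
      (nhds (1 - Q ℓ)) := by
  set E := (Finset.Icc 1 N).erase ℓ with hE
  set G : ℂ → ℂ := fun w => (1 - Q ℓ) * (1 - (Q ℓ)⁻¹ * (w * w)) *
      (∏ i ∈ E, (1 - Q i * s i * w) * (1 - (Q i)⁻¹ * w / s i))
      / (∏ i ∈ E, (1 - s i * w) * (1 - w / s i)) with hG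
  have hNcont : Continuous fun w : ℂ => ∏ i ∈ E, (1 - Q i * s i * w) * (1 - (Q i)⁻¹ * w / s i) := by
    apply continuous_finset_prod
    intro i _
    fun_prop
  have hDcont : Continuous fun w : ℂ => ∏ i ∈ E, (1 - s i * w) * (1 - w / s i) := by
    apply continuous_finset_prod
    intro i _
    fun_prop
  have hD0 : (∏ i ∈ E, ((1 : ℂ) - s i * 0) * (1 - 0 / s i)) = 1 := by
    calc (∏ i ∈ E, ((1 : ℂ) - s i * 0) * (1 - 0 / s i)) = ∏ _i ∈ E, (1:ℂ) :=
          Finset.prod_congr rfl fun i _ => by norm_num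
      _ = 1 := Finset.prod_const_one
  have hN0 : (∏ i ∈ E, ((1 : ℂ) - Q i * s i * 0) * (1 - (Q i)⁻¹ * 0 / s i)) = 1 := by
    calc (∏ i ∈ E, ((1 : ℂ) - Q i * s i * 0) * (1 - (Q i)⁻¹ * 0 / s i)) = ∏ _i ∈ E, (1:ℂ) :=
          Finset.prod_congr rfl fun i _ => by norm_num
      _ = 1 := Finset.prod_const_one
  have hkey : Tendsto G (nhdsWithin 0 {0}ᶜ) (nhds (1 - Q ℓ)) := by
    have hcont : ContinuousAt G 0 := by
      apply ContinuousAt.div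
      · exact ((by fun_prop : Continuous fun w : ℂ =>
          (1 - Q ℓ) * (1 - (Q ℓ)⁻¹ * (w * w))).mul hNcont).continuousAt
      · exact hDcont.continuousAt
      · simpa using hD0 ▸ one_ne_zero
    have := hcont.tendsto
    have hval : G 0 = 1 - Q ℓ := by
      rw [hG]
      simp only
      rw [hN0, hD0]
      norm_num
    rw [hval] at this
    exact this.mono_left nhdsWithin_le_nhds
  have hcomp : Tendsto (fun z : ℂ => G z⁻¹) (Bornology.cobounded ℂ) (nhds (1 - Q ℓ)) :=
    hkey.comp tendsto_inv₀_cobounded'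
  refine Tendsto.congr' ?_ hcomp
  have hev : ∀ᶠ z : ℂ in Bornology.cobounded ℂ, z ≠ 0 := by
    have h : ({0}ᶜ : Set ℂ) ∈ Bornology.cobounded ℂ :=
      Bornology.isCobounded_def.mp Bornology.isBounded_singleton.compl
    filter_upwards [h] with z hz
    exact hz
  filter_upwards [hev] with z hz
  rw [termB_diag N Q s ℓ hℓ z, mul_div_cancel_left₀ _ hz, hG]
  simp only
  have hnum : ∏ i ∈ E, (1 - Q i * s i * z⁻¹) * (1 - (Q i)⁻¹ * z⁻¹ / s i)
      = ∏ i ∈ E, (1 - Q i * s i / z) * (1 - (Q i)⁻¹ / (s i * z)) :=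
    Finset.prod_congr rfl fun i _ => by ring
  have hden : ∏ i ∈ E, (1 - s i * z⁻¹) * (1 - z⁻¹ / s i)
      = ∏ i ∈ E, (1 - s i / z) * (1 - 1 / (s i * z)) :=
    Finset.prod_congr rfl fun i _ => by ring
  have h1 : (1 : ℂ) - Q ℓ * z / z = 1 - Q ℓ := by
    rw [mul_div_assoc, div_self hz, mul_one]
  have h2 : (1 : ℂ) - (Q ℓ)⁻¹ * (z⁻¹ * z⁻¹) = 1 - (Q ℓ)⁻¹ / (z * z) := by ring
  rw [hnum, hden, h1, h2]

/-- residues at `0` and `∞` in the proof of Proposition 3.2.  As a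
function of `s_ℓ`, the residues of `F` at `s_ℓ = 0` and `s_ℓ = ∞` are
`lim_{s_ℓ → 0} s_ℓ F(s) = 1 - Q_ℓ⁻¹` and `lim_{s_ℓ → ∞} F(s)/s_ℓ = 1 - Q_ℓ`. -/
theorem residues_at_zero_and_infty (N : ℕ) (Q s : ℕ → ℂ) (ℓ : ℕ)
    (hℓ : ℓ ∈ Finset.Icc 1 N)
    (hQ : ∀ i ∈ Finset.Icc 1 N, Q i ≠ 0)
    (hs0 : ∀ i ∈ Finset.Icc 1 N, i ≠ ℓ → s i ≠ 0)
    (hd : ∀ i ∈ Finset.Icc 1 N, ∀ j ∈ Finset.Icc 1 N,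
      i ≠ ℓ → j ≠ ℓ → i ≠ j → s i ≠ s j)
    (hp : ∀ i ∈ Finset.Icc 1 N, ∀ j ∈ Finset.Icc 1 N,
      i ≠ ℓ → j ≠ ℓ → i ≠ j → s i * s j ≠ 1) :
    Filter.Tendsto (fun z : ℂ => z * FresB N Q s ℓ z)
      (nhdsWithin 0 {0}ᶜ) (nhds (1 - (Q ℓ)⁻¹))
    ∧ Filter.Tendsto (fun z : ℂ => FresB N Q s ℓ z / z)
      (Bornology.cobounded ℂ) (nhds (1 - Q ℓ)) := by
  classical
  constructor
  · have hL : Filter.Tendsto (fun z : ℂ => ∑ k ∈ Finset.Icc 1 N, z * termB N Q s ℓ k z)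
        (nhdsWithin 0 {0}ᶜ)
        (nhds (∑ k ∈ Finset.Icc 1 N, if k = ℓ then 1 - (Q ℓ)⁻¹ else 0)) := by
      apply tendsto_finset_sum
      intro k hk
      by_cases hkl : k = ℓ
      · subst hkl
        simpa using tendsto_diag_zero N Q s k hℓ hQ hs0
      · simpa [hkl] using tendsto_off_zero N Q s ℓ k hℓ hk hkl hs0 hd hp
    have heq : (∑ k ∈ Finset.Icc 1 N, if k = ℓ then 1 - (Q ℓ)⁻¹ else (0:ℂ))
        = 1 - (Q ℓ)⁻¹ := by
      rw [Finset.sum_ite_eq' (Finset.Icc 1 N) ℓ fun _ => 1 - (Q ℓ)⁻¹, if_pos hℓ]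
    rw [heq] at hL
    refine hL.congr fun z => ?_
    rw [FresB_eq_sum, Finset.mul_sum]
  · have hL : Filter.Tendsto (fun z : ℂ => ∑ k ∈ Finset.Icc 1 N, termB N Q s ℓ k z / z)
        (Bornology.cobounded ℂ)
        (nhds (∑ k ∈ Finset.Icc 1 N, if k = ℓ then 1 - Q ℓ else 0)) := by
      apply tendsto_finset_sum
      intro k hk
      by_cases hkl : k = ℓ
      · subst hkl
        simpa using tendsto_diag_inf N Q s k hℓ hs0
      · simpa [hkl] using tendsto_off_inf N Q s ℓ k hℓ hk hkl hs0 hd hp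
    have heq : (∑ k ∈ Finset.Icc 1 N, if k = ℓ then 1 - Q ℓ else (0:ℂ))
        = 1 - Q ℓ := by
      rw [Finset.sum_ite_eq' (Finset.Icc 1 N) ℓ fun _ => 1 - Q ℓ, if_pos hℓ]
    rw [heq] at hL
    refine hL.congr fun z => ?_
    rw [FresB_eq_sum, Finset.sum_div]
end
end
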